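/- arXiv:1912.03190 — 6 statements merged into one kernel-verified Lean document; each statement's English description precedes it below -/
import Mathlib

section
/- Let φ: 𝔻 → 𝔻 be analytic and locally univalent, and define A_φ(z) = ((1-|z|²)/2)·φ''(z)/φ'(z) - z̄ + (1-|z|²)·conj(φ(z))·φ'(z)/(1-|φ(z)|²). If A_φ(z) = 0 for all z in some open disk Δ ⊂ 𝔻, then φ is a conformal automorphism of 𝔻. -/
set_option maxHeartbeats 2000000

open Complex Metric Set Filter Asymptotics Topology

/-- The hyperbolic derivative `D_φ(z) = (1-|z|²) φ'(z) / (1-|φ(z)|²)`. -/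
noncomputable def Dh (φ : ℂ → ℂ) (z : ℂ) : ℂ :=
  (1 - (‖z‖ : ℂ)^2) * deriv φ z / (1 - (‖φ z‖ : ℂ)^2)

/-- The second order operator
`A_φ(z) = ((1-|z|²)/2) φ''/φ' - z̄ + (1-|z|²) conj(φ(z)) φ'(z)/(1-|φ(z)|²)`. -/
noncomputable def Ah (φ : ℂ → ℂ) (z : ℂ) : ℂ :=
  ((1 - (‖z‖ : ℂ)^2) / 2) * (deriv (deriv φ) z / deriv φ z) - (starRingEnd ℂ) z
    + (1 - (‖z‖ : ℂ)^2) * (starRingEnd ℂ) (φ z) * deriv φ z / (1 - (‖φ z‖ : ℂ)^2)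

/-- The Schwarzian derivative `S_φ = φ'''/φ' - (3/2)(φ''/φ')²`. -/
noncomputable def Sh (φ : ℂ → ℂ) (z : ℂ) : ℂ :=
  deriv (deriv (deriv φ)) z / deriv φ z - (3/2) * (deriv (deriv φ) z / deriv φ z)^2

/-- Wirtinger derivative `∂/∂z`. -/
noncomputable def wDz (f : ℂ → ℂ) (z : ℂ) : ℂ :=
  (fderiv ℝ f z 1 - Complex.I * fderiv ℝ f z Complex.I) / 2

/-- Wirtinger derivative `∂/∂z̄`. -/
noncomputable def wDzbar (f : ℂ → ℂ) (z : ℂ) : ℂ :=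
  (fderiv ℝ f z 1 + Complex.I * fderiv ℝ f z Complex.I) / 2

noncomputable def sig (a z : ℂ) : ℂ := (a - z) / (1 - (starRingEnd ℂ) a * z)

lemma normc_sq (z : ℂ) : ((‖z‖ : ℂ))^2 = z * (starRingEnd ℂ) z := by
  rw [mul_conj]
  norm_cast
  rw [Complex.sq_norm]


lemma step1 (φ : ℂ → ℂ)
    (hφ : DifferentiableOn ℂ φ (ball (0:ℂ) 1))
    (hφm : MapsTo φ (ball (0:ℂ) 1) (ball (0:ℂ) 1))
    (hφ' : ∀ z ∈ ball (0:ℂ) 1, deriv φ z ≠ 0)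
    (w : ℂ) (r : ℝ) (hr : 0 < r) (hsub : ball w r ⊆ ball (0:ℂ) 1)
    (hA : ∀ z ∈ ball w r, Ah φ z = 0) :
    (1 - w * (starRingEnd ℂ) w)^2 * (deriv φ w * (starRingEnd ℂ) (deriv φ w))
      = (1 - φ w * (starRingEnd ℂ) (φ w))^2 := by
  have hw : w ∈ ball (0:ℂ) 1 := hsub (mem_ball_self hr)
  have han : AnalyticOnNhd ℂ φ (ball (0:ℂ) 1) := hφ.analyticOnNhd isOpen_ball
  have hφa : DifferentiableAt ℂ φ w := (han w hw).differentiableAt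
  have hd1d : DifferentiableAt ℂ (deriv φ) w := (han.deriv w hw).differentiableAt
  have hd2d : DifferentiableAt ℂ (deriv (deriv φ)) w := (han.deriv.deriv w hw).differentiableAt
  have hd1 : deriv φ w ≠ 0 := hφ' w hw
  have hp : ‖φ w‖ < 1 := by simpa using hφm hw
  set G : ℂ → ℂ := fun z => deriv (deriv φ) z / deriv φ z with hGdef
  have hGd : DifferentiableAt ℂ G w := hd2d.div hd1d hd1
  set F : ℂ → ℂ := fun z => (1 - z * (starRingEnd ℂ) z) * (2:ℂ)⁻¹ * G z - (starRingEnd ℂ) z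
    + (1 - z * (starRingEnd ℂ) z) * (starRingEnd ℂ) (φ z) * deriv φ z
      * (1 - φ z * (starRingEnd ℂ) (φ z))⁻¹ with hFdef
  have hFA : ∀ z, Ah φ z = F z := by
    intro z
    rw [Ah, normc_sq z, normc_sq (φ z), div_eq_mul_inv]
    simp only [hFdef]
    ring
  -- denominator nonzero
  have hden : (1 : ℂ) - φ w * (starRingEnd ℂ) (φ w) ≠ 0 := by
    rw [mul_conj]
    intro h
    have : normSq (φ w) = 1 := by
      have := sub_eq_zero.mp h
      exact_mod_cast this.symm
    have h2 : normSq (φ w) < 1 := by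
      rw [← Complex.sq_norm]
      nlinarith [hp, norm_nonneg (φ w)]
    linarith [this, h2]
  -- F vanishes near w
  have hF0 : F =ᶠ[nhds w] fun _ => (0:ℂ) := by
    filter_upwards [isOpen_ball.mem_nhds (mem_ball_self hr)] with z hz
    rw [← hFA z]; exact hA z hz
  have hfder : fderiv ℝ F w = 0 := by
    rw [hF0.fderiv_eq, fderiv_fun_const]; rfl
  -- build HasFDerivAt
  have hcj : HasFDerivAt (fun z : ℂ => (starRingEnd ℂ) z)
      (conjCLE.toContinuousLinearMap) w := conjCLE.hasFDerivAt
  have hφF := (hφa.hasDerivAt.hasFDerivAt).restrictScalars ℝ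
  have hcφ := (conjCLE.hasFDerivAt (x := φ w)).comp w hφF
  have hφ'F := (hd1d.hasDerivAt.hasFDerivAt).restrictScalars ℝ
  have hGF := (hGd.hasDerivAt.hasFDerivAt).restrictScalars ℝ
  have hq := (hasFDerivAt_id w).mul hcj
  have h1q := (hasFDerivAt_const (1:ℂ) w).sub hq
  have hhalf := h1q.mul (hasFDerivAt_const ((2:ℂ)⁻¹) w)
  have hT1 := hhalf.mul hGF
  have hqφ := hφF.mul hcφ
  have hdenF := (hasFDerivAt_const (1:ℂ) w).sub hqφ
  have hinv0 := (hasDerivAt_inv hden).hasFDerivAt.restrictScalars ℝ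
  have hinv : HasFDerivAt (fun z : ℂ => (1 - φ z * (starRingEnd ℂ) (φ z))⁻¹) _ w :=
    hinv0.comp w hdenF
  have hnum := (h1q.mul hcφ).mul hφ'F
  have hT3 := hnum.mul hinv
  have hF : HasFDerivAt F _ w := (hT1.sub hcj).add hT3
  have hL0 := hF.fderiv
  rw [hfder] at hL0
  have E1 := congrArg (fun (L : ℂ →L[ℝ] ℂ) => L 1) hL0
  have EI := congrArg (fun (L : ℂ →L[ℝ] ℂ) => L Complex.I) hL0
  simp [ContinuousLinearMap.smul_apply, ContinuousLinearMap.comp_apply,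
    ContinuousLinearMap.coe_restrictScalars', ContinuousLinearMap.smulRight_apply,
    ContinuousLinearMap.one_apply, smul_eq_mul, Complex.conj_I] at E1 EI
  have hAw : F w = 0 := by rw [← hFA w]; exact hA w (mem_ball_self hr)
  simp only [hFdef] at hAw
  have hC : -(w * G w)/2 - 1
      + (1 - w * (starRingEnd ℂ) w) * (starRingEnd ℂ) (φ w) * deriv φ w * (φ w * (starRingEnd ℂ) (deriv φ w)) / (1 - φ w * (starRingEnd ℂ) (φ w))^2
      + (1 - w * (starRingEnd ℂ) w) * (deriv φ w * (starRingEnd ℂ) (deriv φ w)) / (1 - φ w * (starRingEnd ℂ) (φ w))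
      - w * (starRingEnd ℂ) (φ w) * deriv φ w / (1 - φ w * (starRingEnd ℂ) (φ w)) = 0 := by
    linear_combination (-(1:ℂ)/2) * E1 - (Complex.I/2) * EI + (((1/2 : ℂ) * deriv φ w * (starRingEnd ℂ) (φ w) * φ w * (starRingEnd ℂ) (deriv φ w) * ((1 - φ w * (starRingEnd ℂ) (φ w))^2)⁻¹ + (1/2 : ℂ) * deriv φ w * (starRingEnd ℂ) (deriv φ w) * (1 - φ w * (starRingEnd ℂ) (φ w))⁻¹ - (1/2 : ℂ) * (deriv φ w)^2 * ((starRingEnd ℂ) (φ w))^2 * ((1 - φ w * (starRingEnd ℂ) (φ w))^2)⁻¹ - (1/4 : ℂ) * deriv G w - (1/2 : ℂ)) + (-1 / 2) + (w * deriv (deriv φ) w * (deriv φ w)⁻¹ * (-1 / 4)) + (w * deriv (deriv φ) w * (starRingEnd ℂ) w * (starRingEnd ℂ) (φ w) * (1 - (starRingEnd ℂ) (φ w) * φ w)⁻¹ * (1 / 2)) + (w * deriv φ w * (starRingEnd ℂ) w * (starRingEnd ℂ) (φ w) * φ w * (starRingEnd ℂ) (deriv φ w) * (1 - (starRingEnd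 ℂ) (φ w) * φ w * 2 + (starRingEnd ℂ) (φ w) ^ 2 * φ w ^ 2)⁻¹ * (-1 / 2)) + (w * deriv φ w * (starRingEnd ℂ) w * (starRingEnd ℂ) (deriv φ w) * (1 - (starRingEnd ℂ) (φ w) * φ w)⁻¹ * (-1 / 2)) + (w * deriv φ w * (starRingEnd ℂ) (φ w) * (1 - (starRingEnd ℂ) (φ w) * φ w)⁻¹ * (-1 / 2)) + (w * deriv φ w ^ 2 * (starRingEnd ℂ) w * (starRingEnd ℂ) (φ w) ^ 2 * (1 - (starRingEnd ℂ) (φ w) * φ w * 2 + (starRingEnd ℂ) (φ w) ^ 2 * φ w ^ 2)⁻¹ * (1 / 2)) + (w * (starRingEnd ℂ) w * deriv G w * (1 / 4)) + (deriv (deriv φ) w * (deriv φ w)⁻¹ * (starRingEnd ℂ) w * (1 / 4)) + (deriv (deriv φ) w * (starRingEnd ℂ) (φ w) * (1 - (starRingEnd ℂ) (φ w) * φ w)⁻¹ * (-1 / 2)) + (deriv φ w * (starRingEnd ℂ) w * (starRingEnd ℂ) (φ w) * (1 - (starRingEnd ℂ) (φ w) * φ w)⁻¹ * (1 / 2)) +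 (deriv φ w * (starRingEnd ℂ) (φ w) * φ w * (starRingEnd ℂ) (deriv φ w) * (1 - (starRingEnd ℂ) (φ w) * φ w * 2 + (starRingEnd ℂ) (φ w) ^ 2 * φ w ^ 2)⁻¹ * (1 / 2)) + (deriv φ w * (starRingEnd ℂ) (deriv φ w) * (1 - (starRingEnd ℂ) (φ w) * φ w)⁻¹ * (1 / 2)) + (deriv φ w ^ 2 * (starRingEnd ℂ) (φ w) ^ 2 * (1 - (starRingEnd ℂ) (φ w) * φ w * 2 + (starRingEnd ℂ) (φ w) ^ 2 * φ w ^ 2)⁻¹ * (-1 / 2)) + (deriv G w * (-1 / 4)) + (1 / 2) + (deriv φ w * (starRingEnd ℂ) (φ w) * φ w * (starRingEnd ℂ) (deriv φ w) * (1 - (starRingEnd ℂ) (φ w) * φ w * 2 + (starRingEnd ℂ) (φ w) ^ 2 * φ w ^ 2)⁻¹ * (-1 / 2)) + (deriv φ w * (starRingEnd ℂ) (deriv φ w) * (1 - (starRingEnd ℂ) (φ w) * φ w)⁻¹ * (-1 / 2)) + (deriv φ w ^ 2 * (starRingEnd ℂ) (φ w) ^ 2 * (1 - (starRingEnd ℂ)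 (φ w) * φ w * 2 + (starRingEnd ℂ) (φ w) ^ 2 * φ w ^ 2)⁻¹ * (1 / 2)) + (deriv G w * (1 / 4))) * Complex.I_sq
  field_simp [show (1:ℂ) - (starRingEnd ℂ) (φ w) * φ w ≠ 0 by rwa [mul_comm]] at hC hAw
  have key : 2 * (1 - φ w * (starRingEnd ℂ) (φ w))^2 *
      ((1 - w * (starRingEnd ℂ) w)^2 * (deriv φ w * (starRingEnd ℂ) (deriv φ w))
        - (1 - φ w * (starRingEnd ℂ) (φ w))^2) = 0 := by
    linear_combination (1 - w * (starRingEnd ℂ) w) * (1 - φ w * (starRingEnd ℂ) (φ w))^2 * hC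
      + (w * (1 - φ w * (starRingEnd ℂ) (φ w))^3) * hAw
  have h2ne : (2 : ℂ) * (1 - φ w * (starRingEnd ℂ) (φ w))^2 ≠ 0 :=
    mul_ne_zero two_ne_zero (pow_ne_zero 2 hden)
  have := (mul_eq_zero.mp key).resolve_left h2ne
  exact sub_eq_zero.mp this


lemma normsq_c (u : ℂ) : ‖u‖^2 = normSq u := by
  rw [← Complex.sq_norm]

lemma sig_den_ne {a z : ℂ} (ha : ‖a‖ < 1) (hz : ‖z‖ < 1) :
    (1 : ℂ) - (starRingEnd ℂ) a * z ≠ 0 := by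
  intro h
  have h1 : (starRingEnd ℂ) a * z = 1 := by linear_combination -h
  have : ‖(starRingEnd ℂ) a * z‖ < 1 := by
    rw [norm_mul]
    calc ‖(starRingEnd ℂ) a‖ * ‖z‖ ≤ ‖(starRingEnd ℂ) a‖ * 1 := by
          apply mul_le_mul_of_nonneg_left hz.le (norm_nonneg _)
      _ = ‖a‖ := by simp
      _ < 1 := ha
  rw [h1] at this; simp at this
lemma sig_sq_diff (a z : ℂ) :
    ‖(1 : ℂ) - (starRingEnd ℂ) a * z‖^2 - ‖a - z‖^2 = (1 - ‖a‖^2) * (1 - ‖z‖^2) := by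
  simp only [normsq_c, Complex.normSq_apply, Complex.sub_re, Complex.sub_im, Complex.mul_re,
    Complex.mul_im, Complex.one_re, Complex.one_im, Complex.conj_re, Complex.conj_im]
  ring

lemma sig_maps {a z : ℂ} (ha : ‖a‖ < 1) (hz : ‖z‖ < 1) : ‖sig a z‖ < 1 := by
  have hne := sig_den_ne ha hz
  have hpos : 0 < ‖(1 : ℂ) - (starRingEnd ℂ) a * z‖ := norm_pos_iff.mpr hne
  rw [sig, norm_div, div_lt_one hpos]
  have hd := sig_sq_diff a z
  have p1 : (0:ℝ) < 1 - ‖a‖^2 := by nlinarith [norm_nonneg a]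
  have p2 : (0:ℝ) < 1 - ‖z‖^2 := by nlinarith [norm_nonneg z]
  nlinarith [norm_nonneg (a - z), hpos, mul_pos p1 p2]

lemma sig_invol {a z : ℂ} (ha : ‖a‖ < 1) (hz : ‖z‖ < 1) : sig a (sig a z) = z := by
  have h1 := sig_den_ne ha hz
  have h2 : (1 : ℂ) - (starRingEnd ℂ) a * a ≠ 0 := sig_den_ne ha ha
  have e1 : a - sig a z = z * (1 - (starRingEnd ℂ) a * a) / (1 - (starRingEnd ℂ) a * z) := by
    rw [sig]; rw [mul_comm ((starRingEnd ℂ) a) z] at h1 ⊢; field_simp; ring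
  have e2 : 1 - (starRingEnd ℂ) a * sig a z
      = (1 - (starRingEnd ℂ) a * a) / (1 - (starRingEnd ℂ) a * z) := by
    rw [sig]; field_simp; ring
  rw [sig, e1, e2]
  rw [div_div_div_cancel_right₀]
  · exact mul_div_cancel_right₀ z h2
  · exact h1



lemma sig_hasDerivAt {a z : ℂ} (h1 : (1 : ℂ) - (starRingEnd ℂ) a * z ≠ 0) :
    HasDerivAt (sig a) (((starRingEnd ℂ) a * a - 1) / (1 - (starRingEnd ℂ) a * z)^2) z := by
  have hnum : HasDerivAt (fun x : ℂ => a - x) (-1) z := (hasDerivAt_id z).const_sub a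
  have hden : HasDerivAt (fun x : ℂ => 1 - (starRingEnd ℂ) a * x) (-((starRingEnd ℂ) a)) z := by
    simpa using ((hasDerivAt_id z).const_mul ((starRingEnd ℂ) a)).const_sub 1
  have h := hnum.div hden h1
  exact h.congr_deriv (by congr 1; ring)

lemma sig_bijOn {a : ℂ} (ha : ‖a‖ < 1) : BijOn (sig a) (ball (0:ℂ) 1) (ball (0:ℂ) 1) := by
  have hm : MapsTo (sig a) (ball (0:ℂ) 1) (ball (0:ℂ) 1) := by
    intro z hz
    rw [mem_ball_zero_iff] at *
    exact sig_maps ha hz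
  exact InvOn.bijOn ⟨fun z hz => sig_invol ha (mem_ball_zero_iff.mp hz),
    fun z hz => sig_invol ha (mem_ball_zero_iff.mp hz)⟩ hm hm

lemma rot_bijOn {C : ℂ} (hC : ‖C‖ = 1) :
    BijOn (fun z : ℂ => z * C) (ball (0:ℂ) 1) (ball (0:ℂ) 1) := by
  have hC0 : C ≠ 0 := by intro h; rw [h] at hC; simp at hC
  have hm : MapsTo (fun z : ℂ => z * C) (ball (0:ℂ) 1) (ball (0:ℂ) 1) := by
    intro z hz; rw [mem_ball_zero_iff] at *; rw [norm_mul, hC, mul_one]; exact hz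
  have hm' : MapsTo (fun z : ℂ => z * C⁻¹) (ball (0:ℂ) 1) (ball (0:ℂ) 1) := by
    intro z hz; rw [mem_ball_zero_iff] at *
    rw [norm_mul, norm_inv, hC, inv_one, mul_one]; exact hz
  exact InvOn.bijOn ⟨fun z _ => by field_simp, fun z _ => by field_simp⟩ hm hm'

lemma sig_zero (a : ℂ) : sig a 0 = a := by simp [sig]

lemma sig_self (a : ℂ) : sig a a = 0 := by simp [sig]

theorem A_vanishing_implies_moebius
    (φ : ℂ → ℂ)
    (hφ : DifferentiableOn ℂ φ (ball (0:ℂ) 1))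
    (hφm : MapsTo φ (ball (0:ℂ) 1) (ball (0:ℂ) 1))
    (hφ' : ∀ z ∈ ball (0:ℂ) 1, deriv φ z ≠ 0)
    (w : ℂ) (r : ℝ) (hr : 0 < r) (hsub : ball w r ⊆ ball (0:ℂ) 1)
    (hA : ∀ z ∈ ball w r, Ah φ z = 0) :
    BijOn φ (ball (0:ℂ) 1) (ball (0:ℂ) 1) := by
  have hw : w ∈ ball (0:ℂ) 1 := hsub (mem_ball_self hr)
  have hwn : ‖w‖ < 1 := mem_ball_zero_iff.mp hw
  have hbn : ‖φ w‖ < 1 := mem_ball_zero_iff.mp (hφm hw)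
  -- real form of Schwarz--Pick equality
  have hkey : (1 - ‖w‖^2) * ‖deriv φ w‖ = 1 - ‖φ w‖^2 := by
    have h := step1 φ hφ hφm hφ' w r hr hsub hA
    have e1 : (1 : ℂ) - w * (starRingEnd ℂ) w = ((1 - ‖w‖^2 : ℝ) : ℂ) := by
      rw [mul_conj]; push_cast [normsq_c]; ring
    have e2 : (1 : ℂ) - φ w * (starRingEnd ℂ) (φ w) = ((1 - ‖φ w‖^2 : ℝ) : ℂ) := by
      rw [mul_conj]; push_cast [normsq_c]; ring
    have e3 : deriv φ w * (starRingEnd ℂ) (deriv φ w) = ((‖deriv φ w‖^2 : ℝ) : ℂ) := by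
      rw [mul_conj]; push_cast [normsq_c]; ring
    rw [e1, e2, e3] at h
    have h' : (1 - ‖w‖^2)^2 * ‖deriv φ w‖^2 = (1 - ‖φ w‖^2)^2 := by
      exact_mod_cast h
    have p1 : (0:ℝ) < 1 - ‖w‖^2 := by nlinarith [norm_nonneg w]
    have p2 : (0:ℝ) < 1 - ‖φ w‖^2 := by nlinarith [norm_nonneg (φ w)]
    nlinarith [norm_nonneg (deriv φ w), mul_nonneg p1.le (norm_nonneg (deriv φ w))]
  set b := φ w with hbdef
  set g : ℂ → ℂ := fun ζ => sig b (φ (sig w ζ)) with hgdef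
  have hsw : ∀ ζ ∈ ball (0:ℂ) 1, sig w ζ ∈ ball (0:ℂ) 1 := fun ζ hζ =>
    mem_ball_zero_iff.mpr (sig_maps hwn (mem_ball_zero_iff.mp hζ))
  have hgd : DifferentiableOn ℂ g (ball (0:ℂ) 1) := by
    intro ζ hζ
    have hζ1 : ‖ζ‖ < 1 := mem_ball_zero_iff.mp hζ
    have h1 : DifferentiableAt ℂ (sig w) ζ := (sig_hasDerivAt (sig_den_ne hwn hζ1)).differentiableAt
    have h2 : DifferentiableAt ℂ φ (sig w ζ) :=
      hφ.differentiableAt (isOpen_ball.mem_nhds (hsw ζ hζ))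
    have h3 : ‖φ (sig w ζ)‖ < 1 := mem_ball_zero_iff.mp (hφm (hsw ζ hζ))
    have h4 : DifferentiableAt ℂ (sig b) (φ (sig w ζ)) :=
      (sig_hasDerivAt (sig_den_ne hbn h3)).differentiableAt
    have hcomp : DifferentiableAt ℂ (sig b ∘ (φ ∘ sig w)) ζ :=
      DifferentiableAt.comp ζ h4 (DifferentiableAt.comp ζ h2 h1)
    exact hcomp.differentiableWithinAt
  have hgm : MapsTo g (ball (0:ℂ) 1) (ball (0:ℂ) 1) := by
    intro ζ hζ
    exact mem_ball_zero_iff.mpr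
      (sig_maps hbn (mem_ball_zero_iff.mp (hφm (hsw ζ hζ))))
  have hg0 : g 0 = 0 := by rw [hgdef]; simp only [sig_zero]; exact sig_self b
  -- derivative of g at 0
  have hs1 : HasDerivAt (sig w) ((starRingEnd ℂ) w * w - 1) 0 := by
    have := sig_hasDerivAt (a := w) (z := 0) (by simp)
    simpa using this
  have hφa : HasDerivAt φ (deriv φ w) (sig w 0) := by
    rw [sig_zero]
    exact (hφ.differentiableAt (isOpen_ball.mem_nhds hw)).hasDerivAt
  have hsb : HasDerivAt (sig b)
      (((starRingEnd ℂ) b * b - 1) / (1 - (starRingEnd ℂ) b * b)^2) (φ (sig w 0)) := by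
    rw [sig_zero]
    exact sig_hasDerivAt (sig_den_ne hbn hbn)
  have hg' : HasDerivAt g
      ((((starRingEnd ℂ) b * b - 1) / (1 - (starRingEnd ℂ) b * b)^2)
        * (deriv φ w * ((starRingEnd ℂ) w * w - 1))) 0 := by
    exact hsb.comp 0 (hφa.comp 0 hs1)
  have hbb : (starRingEnd ℂ) b * b = ((‖b‖^2 : ℝ) : ℂ) := by
    rw [mul_comm, mul_conj]; push_cast [normsq_c]; ring
  have hww : (starRingEnd ℂ) w * w = ((‖w‖^2 : ℝ) : ℂ) := by
    rw [mul_comm, mul_conj]; push_cast [normsq_c]; ring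
  have hnorm : ‖deriv g 0‖ = 1 := by
    rw [hg'.deriv, hbb, hww]
    have pb : (0:ℝ) < 1 - ‖b‖^2 := by nlinarith [norm_nonneg b]
    rw [norm_mul, norm_div, norm_mul, norm_pow]
    have e1 : ‖((‖b‖^2 : ℝ) : ℂ) - 1‖ = 1 - ‖b‖^2 := by
      rw [show ((‖b‖^2 : ℝ) : ℂ) - 1 = (((‖b‖^2 - 1 : ℝ)) : ℂ) by push_cast; ring,
        Complex.norm_real, Real.norm_eq_abs, abs_of_neg (by linarith : ‖b‖^2 - 1 < 0)]; ring
    have e2 : ‖(1 : ℂ) - ((‖b‖^2 : ℝ) : ℂ)‖ = 1 - ‖b‖^2 := by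
      rw [show (1 : ℂ) - ((‖b‖^2 : ℝ) : ℂ) = (((1 - ‖b‖^2 : ℝ)) : ℂ) by push_cast; ring,
        Complex.norm_real, Real.norm_eq_abs, abs_of_pos pb]
    have e3 : ‖((‖w‖^2 : ℝ) : ℂ) - 1‖ = 1 - ‖w‖^2 := by
      have pw : (0:ℝ) < 1 - ‖w‖^2 := by nlinarith [norm_nonneg w]
      rw [show ((‖w‖^2 : ℝ) : ℂ) - 1 = (((‖w‖^2 - 1 : ℝ)) : ℂ) by push_cast; ring,
        Complex.norm_real, Real.norm_eq_abs, abs_of_neg (by linarith : ‖w‖^2 - 1 < 0)]; ring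
    rw [e1, e2, e3]
    have h2 : ∀ x : ℝ, x ≠ 0 → x / x^2 = x⁻¹ := fun x hx => by
      rw [sq, div_mul_eq_div_div, div_self hx, one_div]
    have h2' := h2 _ pb.ne'
    rw [h2', inv_mul_eq_div, div_eq_one_iff_eq pb.ne']
    linear_combination hkey
  -- Schwarz equality case
  have hgm' : MapsTo g (ball (0:ℂ) 1) (ball (g 0) 1) := by rwa [hg0]
  obtain ⟨C, hC, hEq⟩ := Complex.affine_of_mapsTo_ball_of_exists_norm_dslope_eq_div' hgd (hgm'.mono_right ball_subset_closedBall)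
    ⟨0, mem_ball_self one_pos, by rw [dslope_same]; simpa using hnorm⟩
  have hC1 : ‖C‖ = 1 := by simpa using hC
  have hgC : ∀ ζ ∈ ball (0:ℂ) 1, g ζ = ζ * C := by
    intro ζ hζ
    have := hEq hζ
    simpa [hg0, smul_eq_mul] using this
  have hφeq : EqOn ((sig b) ∘ ((fun u : ℂ => u * C) ∘ (sig w))) φ (ball (0:ℂ) 1) := by
    intro z hz
    have hz1 : ‖z‖ < 1 := mem_ball_zero_iff.mp hz
    have hζ : sig w z ∈ ball (0:ℂ) 1 := hsw z hz
    have h1 : g (sig w z) = sig w z * C := hgC _ hζ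
    have h2 : g (sig w z) = sig b (φ z) := by
      rw [hgdef]; simp only []; rw [sig_invol hwn hz1]
    have h3 : ‖φ z‖ < 1 := mem_ball_zero_iff.mp (hφm hz)
    calc (sig b ∘ ((fun u : ℂ => u * C) ∘ sig w)) z = sig b (sig w z * C) := rfl
      _ = sig b (sig b (φ z)) := by rw [← h1, h2]
      _ = φ z := sig_invol hbn h3
  exact ((sig_bijOn hbn).comp ((rot_bijOn hC1).comp (sig_bijOn hwn))).congr hφeq
end

section
/- Let φ: 𝔻 → 𝔻 be analytic and not constant, and let z₀ ∈ 𝔻 with φ'(z₀) ≠ 0. Then the mixed second partial derivative of log|D_φ| at z₀ satisfies ∂²log|D_φ|/∂z∂z̄ (z₀) = -(1-|D_φ(z₀)|²)/(1-|z₀|²)². In particular, log(1/|D_φ|) is subharmonic on the set where φ' ≠ 0 (since |D_φ| ≤ 1 by the Schwarz–Pick lemma). -/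
open Complex Metric Set Filter Asymptotics Topology

set_option maxHeartbeats 4000000

noncomputable def wmap (a b : ℂ) : ℂ →L[ℝ] ℂ :=
  a • (ContinuousLinearMap.id ℝ ℂ) + b • (Complex.conjCLE : ℂ →L[ℝ] ℂ)

@[simp] lemma wmap_apply (a b v : ℂ) :
    wmap a b v = a * v + b * (starRingEnd ℂ) v := by
  simp [wmap, smul_eq_mul]

def Wirt (f : ℂ → ℂ) (z a b : ℂ) : Prop := HasFDerivAt f (wmap a b) z

lemma wirt_of_hasFDerivAt {f : ℂ → ℂ} {z : ℂ} {L : ℂ →L[ℝ] ℂ}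
    (h : HasFDerivAt f L z) (a b : ℂ)
    (hL : ∀ v, L v = a * v + b * (starRingEnd ℂ) v) : Wirt f z a b := by
  have hEq : L = wmap a b := ContinuousLinearMap.ext fun v => by rw [hL, wmap_apply]
  show HasFDerivAt f (wmap a b) z
  exact hEq ▸ h

lemma wirt_congr {f : ℂ → ℂ} {z a b a' b' : ℂ}
    (h : Wirt f z a b) (ha : a = a') (hb : b = b') : Wirt f z a' b' := ha ▸ hb ▸ h

lemma Wirt.congrFun {f g : ℂ → ℂ} {z a b : ℂ} (h : Wirt f z a b)
    (hfg : ∀ u, g u = f u) : Wirt g z a b := by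
  have hEq : g = f := funext hfg
  show HasFDerivAt g (wmap a b) z
  rw [hEq]
  exact h

lemma Wirt.congr_nhds {f g : ℂ → ℂ} {z a b : ℂ} (h : Wirt f z a b)
    (hfg : ∀ᶠ u in 𝓝 z, g u = f u) : Wirt g z a b := by
  show HasFDerivAt g (wmap a b) z
  exact HasFDerivAt.congr_of_eventuallyEq h hfg

lemma Wirt.wDz_eq {f : ℂ → ℂ} {z a b : ℂ} (h : Wirt f z a b) : wDz f z = a := by
  have hf := HasFDerivAt.fderiv h
  simp only [wDz, hf, wmap_apply, Complex.conj_I, map_one]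
  ring_nf
  simp only [Complex.I_sq]
  ring

lemma Wirt.wDzbar_eq {f : ℂ → ℂ} {z a b : ℂ} (h : Wirt f z a b) : wDzbar f z = b := by
  have hf := HasFDerivAt.fderiv h
  simp only [wDzbar, hf, wmap_apply, Complex.conj_I, map_one]
  ring_nf
  simp only [Complex.I_sq]
  ring

lemma Wirt.of_hasDerivAt {f : ℂ → ℂ} {z d : ℂ} (h : HasDerivAt f d z) : Wirt f z d 0 :=
  wirt_of_hasFDerivAt (h.hasFDerivAt.restrictScalars ℝ) d 0 (fun v => by
    simp [mul_comm])

lemma wirt_const (z c : ℂ) : Wirt (fun _ => c) z 0 0 :=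
  wirt_of_hasFDerivAt (hasFDerivAt_const c z) 0 0 (by simp)

lemma wirt_id (z : ℂ) : Wirt (fun w => w) z 1 0 :=
  Wirt.of_hasDerivAt (hasDerivAt_id z)

lemma wirt_conj_id (z : ℂ) : Wirt (fun w => (starRingEnd ℂ) w) z 0 1 :=
  wirt_of_hasFDerivAt (Complex.conjCLE : ℂ →L[ℝ] ℂ).hasFDerivAt 0 1 (fun v => by simp)

lemma Wirt.add {f g : ℂ → ℂ} {z a b a' b' : ℂ} (hf : Wirt f z a b) (hg : Wirt g z a' b') :
    Wirt (fun w => f w + g w) z (a + a') (b + b') :=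
  wirt_of_hasFDerivAt (HasFDerivAt.add hf hg) _ _ (fun v => by
    simp only [ContinuousLinearMap.add_apply, wmap_apply]; ring)

lemma Wirt.sub {f g : ℂ → ℂ} {z a b a' b' : ℂ} (hf : Wirt f z a b) (hg : Wirt g z a' b') :
    Wirt (fun w => f w - g w) z (a - a') (b - b') :=
  wirt_of_hasFDerivAt (HasFDerivAt.sub hf hg) _ _ (fun v => by
    simp only [ContinuousLinearMap.sub_apply, wmap_apply]; ring)

lemma Wirt.mul {f g : ℂ → ℂ} {z a b a' b' : ℂ} (hf : Wirt f z a b) (hg : Wirt g z a' b') :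
    Wirt (fun w => f w * g w) z (a * g z + f z * a') (b * g z + f z * b') :=
  wirt_of_hasFDerivAt (HasFDerivAt.mul' hf hg) _ _ (fun v => by
    simp only [ContinuousLinearMap.add_apply, ContinuousLinearMap.smul_apply,
      ContinuousLinearMap.smulRight_apply, wmap_apply, smul_eq_mul, op_smul_eq_mul]; ring)

lemma Wirt.const_mul {f : ℂ → ℂ} {z a b : ℂ} (hf : Wirt f z a b) (c : ℂ) :
    Wirt (fun w => c * f w) z (c * a) (c * b) :=
  wirt_of_hasFDerivAt (HasFDerivAt.const_mul hf c) _ _ (fun v => by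
    simp only [ContinuousLinearMap.smul_apply, wmap_apply, smul_eq_mul]; ring)

lemma Wirt.inv {f : ℂ → ℂ} {z a b : ℂ} (hf : Wirt f z a b) (h0 : f z ≠ 0) :
    Wirt (fun w => (f w)⁻¹) z (-(a / f z ^ 2)) (-(b / f z ^ 2)) :=
  wirt_of_hasFDerivAt ((hasDerivAt_inv h0).comp_hasFDerivAt z hf) _ _ (fun v => by
    simp only [ContinuousLinearMap.smul_apply, wmap_apply, smul_eq_mul]
    field_simp
    ring)

lemma Wirt.conj {f : ℂ → ℂ} {z a b : ℂ} (hf : Wirt f z a b) :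
    Wirt (fun w => (starRingEnd ℂ) (f w)) z ((starRingEnd ℂ) b) ((starRingEnd ℂ) a) :=
  wirt_of_hasFDerivAt ((Complex.conjCLE : ℂ →L[ℝ] ℂ).hasFDerivAt.comp z hf) _ _ (fun v => by
    simp [wmap_apply, map_add, map_mul, Complex.conj_conj]
    ring)

lemma Wirt.logAbs {f : ℂ → ℂ} {z a b : ℂ} (hf : Wirt f z a b) (h0 : f z ≠ 0) :
    Wirt (fun w => ((Real.log (‖f w‖) : ℝ) : ℂ)) z
      ((a * (starRingEnd ℂ) (f z) + f z * (starRingEnd ℂ) b) / (2 * (f z * (starRingEnd ℂ) (f z))))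
      ((b * (starRingEnd ℂ) (f z) + f z * (starRingEnd ℂ) a) / (2 * (f z * (starRingEnd ℂ) (f z)))) := by
  set p := a * (starRingEnd ℂ) (f z) + f z * (starRingEnd ℂ) b with hp
  have hN : Wirt (fun w => f w * (starRingEnd ℂ) (f w)) z p ((starRingEnd ℂ) p) := by
    refine wirt_congr (hf.mul hf.conj) rfl ?_
    rw [hp]; simp only [map_add, map_mul, Complex.conj_conj]; ring
  have hfun1 : (fun w => Complex.normSq (f w)) = fun w => (f w * (starRingEnd ℂ) (f w)).re :=
    funext fun w => by rw [Complex.mul_conj, Complex.ofReal_re]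
  have hNre : HasFDerivAt (fun w => Complex.normSq (f w))
      (Complex.reCLM.comp (wmap p ((starRingEnd ℂ) p))) z := by
    rw [hfun1]
    exact Complex.reCLM.hasFDerivAt.comp z hN
  have hn0 : Complex.normSq (f z) ≠ 0 := by
    simpa [Complex.normSq_eq_zero] using h0
  have hlog : HasFDerivAt (fun w => Real.log (Complex.normSq (f w)))
      ((Complex.normSq (f z))⁻¹ • (Complex.reCLM.comp (wmap p ((starRingEnd ℂ) p)))) z :=
    by have := (Real.hasDerivAt_log hn0).comp_hasFDerivAt z hNre; exact this
  have hC : HasFDerivAt (fun w => ((Real.log (Complex.normSq (f w)) : ℝ) : ℂ))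
      (Complex.ofRealCLM.comp ((Complex.normSq (f z))⁻¹ •
        (Complex.reCLM.comp (wmap p ((starRingEnd ℂ) p))))) z :=
    Complex.ofRealCLM.hasFDerivAt.comp z hlog
  have hC2 := hC.const_mul ((1 : ℂ)/2)
  have hfun2 : (fun w => (1/2 : ℂ) * ((Real.log (Complex.normSq (f w)) : ℝ) : ℂ))
      = fun w => ((Real.log (‖f w‖) : ℝ) : ℂ) := by
    funext w
    rw [← Complex.sq_norm, Real.log_pow]
    push_cast
    ring
  rw [hfun2] at hC2
  refine wirt_of_hasFDerivAt hC2 _ _ (fun v => ?_)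
  simp only [ContinuousLinearMap.smul_apply, ContinuousLinearMap.coe_comp',
    Function.comp_apply, Complex.ofRealCLM_apply, Complex.reCLM_apply, wmap_apply,
    smul_eq_mul]
  have hre : p * v + (starRingEnd ℂ) p * (starRingEnd ℂ) v = ((2 * (p * v).re : ℝ) : ℂ) := by
    rw [← map_mul, Complex.add_conj]
  have hre' : (p * v + (starRingEnd ℂ) p * (starRingEnd ℂ) v).re = 2 * (p * v).re := by
    rw [hre, Complex.ofReal_re]
  rw [hre']
  rw [Complex.mul_conj]
  have hq : b * (starRingEnd ℂ) (f z) + f z * (starRingEnd ℂ) a = (starRingEnd ℂ) p := by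
    rw [hp]; simp only [map_add, map_mul, Complex.conj_conj]; ring
  rw [hq]
  push_cast
  have hn0c : ((Complex.normSq (f z) : ℝ) : ℂ) ≠ 0 := Complex.ofReal_ne_zero.mpr hn0
  have h3 : (((p * v).re : ℝ) : ℂ) = (p * v + (starRingEnd ℂ) p * (starRingEnd ℂ) v) / 2 := by
    rw [← map_mul, Complex.add_conj]; push_cast; ring
  rw [h3]
  field_simp

lemma normsq_c_s4 (w : ℂ) : ((‖w‖ : ℝ) : ℂ)^2 = w * (starRingEnd ℂ) w := by
  rw [← Complex.ofReal_pow, Complex.sq_norm, Complex.mul_conj]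

lemma abs_sq_c (X : ℂ) : ((‖X‖ : ℝ) : ℂ)^2 = X * (starRingEnd ℂ) X := by
  rw [← Complex.ofReal_pow, Complex.sq_norm, Complex.mul_conj]

lemma Dh_eq (φ : ℂ → ℂ) (u : ℂ) :
    Dh φ u = (1 - u * (starRingEnd ℂ) u) * deriv φ u
      / (1 - φ u * (starRingEnd ℂ) (φ u)) := by
  rw [Dh, normsq_c_s4, normsq_c_s4]

lemma one_sub_ne (w : ℂ) (hw : ‖w‖ < 1) : (1 : ℂ) - w * (starRingEnd ℂ) w ≠ 0 := by
  rw [← normsq_c_s4]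
  intro h
  have h2 : ((‖w‖ : ℝ) : ℂ)^2 = 1 := by linear_combination -h
  have h3 : (‖w‖ : ℝ)^2 = 1 := by exact_mod_cast h2
  nlinarith [norm_nonneg w]

noncomputable def gfun (φ : ℂ → ℂ) (w : ℂ) : ℂ :=
  -w / (1 - w * (starRingEnd ℂ) w)
    + (1/2) * (starRingEnd ℂ) (deriv (deriv φ) w / deriv φ w)
    + φ w * (starRingEnd ℂ) (deriv φ w) / (1 - φ w * (starRingEnd ℂ) (φ w))

theorem mixed_partial_log_Dh
    (φ : ℂ → ℂ)
    (hφ : DifferentiableOn ℂ φ (ball (0:ℂ) 1))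
    (hφm : MapsTo φ (ball (0:ℂ) 1) (ball (0:ℂ) 1))
    (hφnc : ¬ ∃ c, ∀ z ∈ ball (0:ℂ) 1, φ z = c)
    (z₀ : ℂ) (hz₀ : z₀ ∈ ball (0:ℂ) 1) (hd : deriv φ z₀ ≠ 0) :
    wDz (fun w => wDzbar (fun u => ((Real.log (‖Dh φ u‖) : ℝ) : ℂ)) w) z₀
      = -((1 - ((‖Dh φ z₀‖ : ℝ) : ℂ)^2) / ((1 - (‖z₀‖ : ℂ)^2)^2) ) := by
  have hA : AnalyticOnNhd ℂ φ (ball (0:ℂ) 1) := hφ.analyticOnNhd isOpen_ball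
  have hA1 : AnalyticOnNhd ℂ (deriv φ) (ball (0:ℂ) 1) := hA.deriv
  have hA2 : AnalyticOnNhd ℂ (deriv (deriv φ)) (ball (0:ℂ) 1) := hA1.deriv
  -- key pointwise identity
  have key : ∀ w ∈ ball (0:ℂ) 1, deriv φ w ≠ 0 →
      Wirt (fun u => ((Real.log (‖Dh φ u‖) : ℝ) : ℂ)) w
        ((starRingEnd ℂ) (gfun φ w)) (gfun φ w) := by
    intro w hw hdw
    have hw1 : ‖w‖ < 1 := mem_ball_zero_iff.mp hw
    have hφw1 : ‖φ w‖ < 1 := mem_ball_zero_iff.mp (hφm hw)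
    have ht0 : (1:ℂ) - w * (starRingEnd ℂ) w ≠ 0 := one_sub_ne w hw1
    have hs0 : (1:ℂ) - φ w * (starRingEnd ℂ) (φ w) ≠ 0 := one_sub_ne _ hφw1
    have ht0' : (1:ℂ) - (starRingEnd ℂ) w * w ≠ 0 := by rw [mul_comm]; exact ht0
    have hs0' : (1:ℂ) - (starRingEnd ℂ) (φ w) * φ w ≠ 0 := by rw [mul_comm]; exact hs0
    have hdw' : (starRingEnd ℂ) (deriv φ w) ≠ 0 := star_ne_zero.mpr hdw
    have Wφ : Wirt φ w (deriv φ w) 0 :=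
      Wirt.of_hasDerivAt ((hA w hw).differentiableAt).hasDerivAt
    have Wd : Wirt (deriv φ) w (deriv (deriv φ) w) 0 :=
      Wirt.of_hasDerivAt ((hA1 w hw).differentiableAt).hasDerivAt
    have Wt : Wirt (fun u => 1 - u * (starRingEnd ℂ) u) w (-((starRingEnd ℂ) w)) (-w) :=
      wirt_congr ((wirt_const w 1).sub ((wirt_id w).mul (wirt_conj_id w))) (by ring) (by ring)
    have Ws : Wirt (fun u => 1 - φ u * (starRingEnd ℂ) (φ u)) w
        (-(deriv φ w * (starRingEnd ℂ) (φ w))) (-(φ w * (starRingEnd ℂ) (deriv φ w))) :=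
      wirt_congr ((wirt_const w 1).sub (Wφ.mul Wφ.conj))
        (by simp only [map_zero]; ring) (by ring)
    have W1 : Wirt (fun u => ((Real.log (‖1 - u * (starRingEnd ℂ) u‖) : ℝ) : ℂ)) w
        (-((starRingEnd ℂ) w) / (1 - w * (starRingEnd ℂ) w))
        (-w / (1 - w * (starRingEnd ℂ) w)) := by
      refine wirt_congr (Wt.logAbs ht0) ?_ ?_ <;>
      · simp only [map_sub, map_mul, map_one, map_neg, Complex.conj_conj]
        field_simp
        ring
    have W2 : Wirt (fun u => ((Real.log (‖deriv φ u‖) : ℝ) : ℂ)) w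
        ((1/2) * (deriv (deriv φ) w / deriv φ w))
        ((1/2) * (starRingEnd ℂ) (deriv (deriv φ) w / deriv φ w)) := by
      refine wirt_congr (Wd.logAbs hdw) ?_ ?_ <;>
      · simp only [map_zero, map_div₀, mul_zero, add_zero, zero_add, zero_mul]
        field_simp
    have W3 : Wirt (fun u => ((Real.log (‖1 - φ u * (starRingEnd ℂ) (φ u)‖) : ℝ) : ℂ)) w
        (-(deriv φ w * (starRingEnd ℂ) (φ w)) / (1 - φ w * (starRingEnd ℂ) (φ w)))
        (-(φ w * (starRingEnd ℂ) (deriv φ w)) / (1 - φ w * (starRingEnd ℂ) (φ w))) := by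
      refine wirt_congr (Ws.logAbs hs0) ?_ ?_ <;>
      · simp only [map_sub, map_mul, map_one, map_neg, Complex.conj_conj]
        field_simp
        ring
    have Wsum := (W1.add W2).sub W3
    have hev2 : ∀ᶠ u in 𝓝 w, ((Real.log (‖Dh φ u‖) : ℝ) : ℂ)
        = (((Real.log (‖1 - u * (starRingEnd ℂ) u‖) : ℝ) : ℂ)
            + ((Real.log (‖deriv φ u‖) : ℝ) : ℂ))
          - ((Real.log (‖1 - φ u * (starRingEnd ℂ) (φ u)‖) : ℝ) : ℂ) := by
      filter_upwards [isOpen_ball.mem_nhds hw,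
        (hA1 w hw).continuousAt.eventually_ne hdw] with u h1 h2
      have htu : (1:ℂ) - u * (starRingEnd ℂ) u ≠ 0 := one_sub_ne u (mem_ball_zero_iff.mp h1)
      have hsu : (1:ℂ) - φ u * (starRingEnd ℂ) (φ u) ≠ 0 :=
        one_sub_ne _ (mem_ball_zero_iff.mp (hφm h1))
      have e1 : ‖1 - u * (starRingEnd ℂ) u‖ ≠ 0 := norm_ne_zero_iff.mpr htu
      have e2 : ‖deriv φ u‖ ≠ 0 := norm_ne_zero_iff.mpr h2
      have e3 : ‖1 - φ u * (starRingEnd ℂ) (φ u)‖ ≠ 0 := norm_ne_zero_iff.mpr hsu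
      rw [Dh_eq, norm_div, norm_mul, Real.log_div (mul_ne_zero e1 e2) e3, Real.log_mul e1 e2]
      push_cast
      ring
    have WL := Wsum.congr_nhds hev2
    refine wirt_congr WL ?_ ?_
    · rw [gfun]
      simp only [map_add, map_sub, map_mul, map_one, map_zero, map_div₀, map_neg,
        map_inv₀, Complex.conj_conj, map_ofNat]
      field_simp
      ring
    · rw [gfun]
      ring
  -- eventually equal
  have hev : (fun w => wDzbar (fun u => ((Real.log (‖Dh φ u‖) : ℝ) : ℂ)) w)
      =ᶠ[𝓝 z₀] gfun φ := by
    filter_upwards [isOpen_ball.mem_nhds hz₀,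
      (hA1 z₀ hz₀).continuousAt.eventually_ne hd] with w h1 h2
    exact (key w h1 h2).wDzbar_eq
  have hstep : wDz (fun w => wDzbar (fun u => ((Real.log (‖Dh φ u‖) : ℝ) : ℂ)) w) z₀
      = wDz (gfun φ) z₀ := by
    unfold wDz
    rw [hev.fderiv_eq]
  rw [hstep]
  -- Wirtinger derivative of gfun at z₀
  have hz1 : ‖z₀‖ < 1 := mem_ball_zero_iff.mp hz₀
  have hφz1 : ‖φ z₀‖ < 1 := mem_ball_zero_iff.mp (hφm hz₀)
  have ht0 : (1:ℂ) - z₀ * (starRingEnd ℂ) z₀ ≠ 0 := one_sub_ne z₀ hz1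
  have hs0 : (1:ℂ) - φ z₀ * (starRingEnd ℂ) (φ z₀) ≠ 0 := one_sub_ne _ hφz1
  have ht0' : (1:ℂ) - (starRingEnd ℂ) z₀ * z₀ ≠ 0 := by rw [mul_comm]; exact ht0
  have hs0' : (1:ℂ) - (starRingEnd ℂ) (φ z₀) * φ z₀ ≠ 0 := by rw [mul_comm]; exact hs0
  have hd' : (starRingEnd ℂ) (deriv φ z₀) ≠ 0 := star_ne_zero.mpr hd
  have Wφ : Wirt φ z₀ (deriv φ z₀) 0 :=
    Wirt.of_hasDerivAt ((hA z₀ hz₀).differentiableAt).hasDerivAt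
  have Wd : Wirt (deriv φ) z₀ (deriv (deriv φ) z₀) 0 :=
    Wirt.of_hasDerivAt ((hA1 z₀ hz₀).differentiableAt).hasDerivAt
  have Wd2 : Wirt (deriv (deriv φ)) z₀ (deriv (deriv (deriv φ)) z₀) 0 :=
    Wirt.of_hasDerivAt ((hA2 z₀ hz₀).differentiableAt).hasDerivAt
  have Wt : Wirt (fun u => 1 - u * (starRingEnd ℂ) u) z₀ (-((starRingEnd ℂ) z₀)) (-z₀) :=
    wirt_congr ((wirt_const z₀ 1).sub ((wirt_id z₀).mul (wirt_conj_id z₀))) (by ring) (by ring)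
  have Ws : Wirt (fun u => 1 - φ u * (starRingEnd ℂ) (φ u)) z₀
      (-(deriv φ z₀ * (starRingEnd ℂ) (φ z₀))) (-(φ z₀ * (starRingEnd ℂ) (deriv φ z₀))) :=
    wirt_congr ((wirt_const z₀ 1).sub (Wφ.mul Wφ.conj))
      (by simp only [map_zero]; ring) (by ring)
  have Wneg : Wirt (fun u => -u) z₀ (-1) 0 :=
    Wirt.of_hasDerivAt (hasDerivAt_id z₀).neg
  have W1raw := Wneg.mul (Wt.inv ht0)
  have W1 : Wirt (fun u => -u * (1 - u * (starRingEnd ℂ) u)⁻¹) z₀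
      (-(1 / (1 - z₀ * (starRingEnd ℂ) z₀)^2)) (-(z₀^2 / (1 - z₀ * (starRingEnd ℂ) z₀)^2)) := by
    refine wirt_congr W1raw ?_ ?_ <;>
    · field_simp
      ring
  have W2raw := ((Wd2.mul (Wd.inv hd)).conj).const_mul (1/2 : ℂ)
  have W2 := wirt_congr W2raw
    (show _ = (0:ℂ) by simp) rfl
  have W3raw := (Wφ.mul Wd.conj).mul (Ws.inv hs0)
  have W3 := wirt_congr W3raw
    (show _ = deriv φ z₀ * (starRingEnd ℂ) (deriv φ z₀) / (1 - φ z₀ * (starRingEnd ℂ) (φ z₀))^2 by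
      simp only [map_zero, mul_zero, add_zero, zero_mul, zero_add]
      field_simp
      ring) rfl
  have Wg := (W1.add W2).add W3
  have Wg' := Wg.congrFun (g := gfun φ) (fun u => by
    simp only [gfun, div_eq_mul_inv])
  rw [Wg'.wDz_eq]
  -- final algebra
  rw [abs_sq_c, Dh_eq, normsq_c_s4]
  simp only [map_sub, map_mul, map_one, map_div₀, Complex.conj_conj]
  field_simp
  ring
end

section
/- Let φ: 𝔻 → 𝔻 be analytic and not constant. At every point z where φ'(z) ≠ 0, the Wirtinger derivative of A_φ with respect to z satisfies (1-|z|²)·∂A_φ/∂z = (1-|z|²)²·S_φ(z)/2 + A_φ(z)² + z̄·A_φ(z), where S_φ = (φ''/φ')' - (1/2)(φ''/φ')² is the Schwarzian derivative. -/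
open Complex Metric Set Filter Asymptotics Topology

lemma wdz_fd {f : ℂ → ℂ} {L : ℂ →L[ℝ] ℂ} {z : ℂ} (h : HasFDerivAt f L z) :
    wDz f z = (L 1 - Complex.I * L Complex.I) / 2 := by
  rw [wDz, h.fderiv]

lemma wdz_const (c z : ℂ) : wDz (fun _ => c) z = 0 := by
  rw [wdz_fd (hasFDerivAt_const c z)]; simp

lemma wdz_add {f g : ℂ → ℂ} {z : ℂ} (hf : DifferentiableAt ℝ f z)
    (hg : DifferentiableAt ℝ g z) :
    wDz (fun w => f w + g w) z = wDz f z + wDz g z := by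
  rw [wdz_fd (f := fun w => f w + g w) (hf.hasFDerivAt.add hg.hasFDerivAt), wDz, wDz]
  simp only [ContinuousLinearMap.add_apply]; ring

lemma wdz_sub {f g : ℂ → ℂ} {z : ℂ} (hf : DifferentiableAt ℝ f z)
    (hg : DifferentiableAt ℝ g z) :
    wDz (fun w => f w - g w) z = wDz f z - wDz g z := by
  rw [wdz_fd (f := fun w => f w - g w) (hf.hasFDerivAt.sub hg.hasFDerivAt), wDz, wDz]
  simp only [ContinuousLinearMap.sub_apply]; ring

lemma wdz_mul {f g : ℂ → ℂ} {z : ℂ} (hf : DifferentiableAt ℝ f z)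
    (hg : DifferentiableAt ℝ g z) :
    wDz (fun w => f w * g w) z = f z * wDz g z + g z * wDz f z := by
  rw [wdz_fd (f := fun w => f w * g w) (hf.hasFDerivAt.mul hg.hasFDerivAt), wDz, wDz]
  simp only [ContinuousLinearMap.add_apply, ContinuousLinearMap.smul_apply, smul_eq_mul]
  ring

lemma wdz_holo {f : ℂ → ℂ} {z : ℂ} (hf : DifferentiableAt ℂ f z) :
    wDz f z = deriv f z := by
  rw [wdz_fd hf.hasDerivAt.complexToReal_fderiv]
  simp only [ContinuousLinearMap.smul_apply, ContinuousLinearMap.one_apply, smul_eq_mul]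
  linear_combination (-(deriv f z)/2) * Complex.I_sq

lemma wdz_conj {f : ℂ → ℂ} {z : ℂ} (hf : DifferentiableAt ℂ f z) :
    wDz (fun w => (starRingEnd ℂ) (f w)) z = 0 := by
  have h1 := hf.hasDerivAt.complexToReal_fderiv
  have h2 : HasFDerivAt (fun w => (starRingEnd ℂ) (f w))
      ((Complex.conjCLE.toContinuousLinearMap).comp (deriv f z • (1 : ℂ →L[ℝ] ℂ))) z :=
    (Complex.conjCLE.toContinuousLinearMap.hasFDerivAt).comp z h1
  rw [wdz_fd h2]
  simp only [ContinuousLinearMap.comp_apply, ContinuousLinearMap.smul_apply,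
    ContinuousLinearMap.one_apply, smul_eq_mul,
    ContinuousLinearEquiv.coe_coe, Complex.conjCLE_apply, map_mul, map_one, Complex.conj_I]
  linear_combination ((starRingEnd ℂ) (deriv f z)/2) * Complex.I_sq

lemma wdz_inv {f : ℂ → ℂ} {z : ℂ} (hf : DifferentiableAt ℝ f z) (h0 : f z ≠ 0) :
    wDz (fun w => (f w)⁻¹) z = -(f z^2)⁻¹ * wDz f z := by
  have h2 : HasFDerivAt (fun w => (f w)⁻¹)
      (((-(f z^2)⁻¹) • (1 : ℂ →L[ℝ] ℂ)).comp (fderiv ℝ f z)) z :=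
    ((hasDerivAt_inv h0).complexToReal_fderiv).comp z hf.hasFDerivAt
  rw [wdz_fd h2, wDz]
  simp only [ContinuousLinearMap.comp_apply, ContinuousLinearMap.smul_apply,
    ContinuousLinearMap.one_apply, smul_eq_mul]
  ring

lemma diff_conj {f : ℂ → ℂ} {z : ℂ} (hf : DifferentiableAt ℂ f z) :
    DifferentiableAt ℝ (fun w => (starRingEnd ℂ) (f w)) z :=
  (((Complex.conjCLE.toContinuousLinearMap.hasFDerivAt).comp z
    hf.hasDerivAt.complexToReal_fderiv) :
    HasFDerivAt (fun w => (starRingEnd ℂ) (f w)) _ z).differentiableAt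

lemma coe_norm_sq (w : ℂ) : ((‖w‖ : ℂ))^2 = w * (starRingEnd ℂ) w := by
  have h : ((‖w‖ : ℂ))^2 = ((‖w‖^2 : ℝ) : ℂ) := by push_cast; ring
  rw [h, Complex.sq_norm, ← Complex.mul_conj]

set_option maxHeartbeats 8000000 in
lemma key_alg (z c a k d1 d2 d3 : ℂ) (hd : d1 ≠ 0) (hQ : 1 - a * k ≠ 0) :
    (1 - z * c) *
      (2⁻¹ * (1 - z * c) * ((d3 * d1 - d2 * d2) / d1 ^ 2) + d2 / d1 * (2⁻¹ * -c + (1 - z * c) * 0) - 0 +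
        ((1 - z * c) * (k * d1) * (-((1 - a * k) ^ 2)⁻¹ * -(k * d1)) +
          (1 - a * k)⁻¹ * ((1 - z * c) * (k * d2 + d1 * 0) + k * d1 * -c))) =
    (1 - z * c) ^ 2 * (d3 / d1 - 3 / 2 * (d2 / d1) ^ 2) / 2 +
        (2⁻¹ * (1 - z * c) * (d2 / d1) - c + (1 - z * c) * (k * d1) * (1 - a * k)⁻¹) ^ 2 +
      c * (2⁻¹ * (1 - z * c) * (d2 / d1) - c + (1 - z * c) * (k * d1) * (1 - a * k)⁻¹) := by
  have h2 : (2:ℂ) ≠ 0 := two_ne_zero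
  have hD : d1 * (2 * d1 ^ 2) * 2 * (2 * d1 * (1 - a * k)) ^ 2 * (2 * d1 * (1 - a * k)) ≠ 0 := by
    apply mul_ne_zero
    apply mul_ne_zero
    · exact mul_ne_zero (mul_ne_zero hd (mul_ne_zero h2 (pow_ne_zero _ hd))) h2
    · exact pow_ne_zero _ (mul_ne_zero (mul_ne_zero h2 hd) hQ)
    · exact mul_ne_zero (mul_ne_zero h2 hd) hQ
  have hQ' : 1 - k * a ≠ 0 := by rwa [mul_comm]
  field_simp
  ring

set_option maxHeartbeats 2000000 in
theorem wirtinger_dz_of_A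
    (φ : ℂ → ℂ)
    (hφ : DifferentiableOn ℂ φ (ball (0:ℂ) 1))
    (hφm : MapsTo φ (ball (0:ℂ) 1) (ball (0:ℂ) 1))
    (hφnc : ¬ ∃ c, ∀ z ∈ ball (0:ℂ) 1, φ z = c) :
    ∀ z ∈ ball (0:ℂ) 1, deriv φ z ≠ 0 →
      (1 - (‖z‖ : ℂ)^2) * wDz (Ah φ) z
        = (1 - (‖z‖ : ℂ)^2)^2 * Sh φ z / 2 + (Ah φ z)^2 + (starRingEnd ℂ) z * Ah φ z := by
  intro z hz hd
  have han : AnalyticOnNhd ℂ φ (ball 0 1) := hφ.analyticOnNhd isOpen_ball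
  have h1 : DifferentiableAt ℂ φ z := (han z hz).differentiableAt
  have h2 : DifferentiableAt ℂ (deriv φ) z := (han.deriv z hz).differentiableAt
  have h3 : DifferentiableAt ℂ (deriv (deriv φ)) z := (han.deriv.deriv z hz).differentiableAt
  have hm : ‖φ z‖ < 1 := mem_ball_zero_iff.mp (hφm hz)
  have hQ : (1:ℂ) - φ z * (starRingEnd ℂ) (φ z) ≠ 0 := by
    have hn : Complex.normSq (φ z) < 1 := by
      rw [Complex.normSq_eq_norm_sq]
      nlinarith [norm_nonneg (φ z)]
    rw [Complex.mul_conj]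
    intro h
    have h10 : (1:ℝ) = Complex.normSq (φ z) := by exact_mod_cast sub_eq_zero.mp h
    linarith
  -- differentiability helpers
  have dcz : DifferentiableAt ℝ (fun w : ℂ => (starRingEnd ℂ) w) z :=
    diff_conj differentiableAt_fun_id
  have dP : DifferentiableAt ℝ (fun w : ℂ => 1 - w * (starRingEnd ℂ) w) z :=
    (differentiableAt_fun_id.mul dcz).const_sub 1
  have dhalfP : DifferentiableAt ℝ (fun w : ℂ => 2⁻¹ * (1 - w * (starRingEnd ℂ) w)) z :=
    (differentiableAt_const _).mul dP
  have dG : DifferentiableAt ℂ (fun w => deriv (deriv φ) w / deriv φ w) z := h3.div h2 hd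
  have dGr : DifferentiableAt ℝ (fun w => deriv (deriv φ) w / deriv φ w) z :=
    dG.restrictScalars ℝ
  have dφr : DifferentiableAt ℝ φ z := h1.restrictScalars ℝ
  have d2r : DifferentiableAt ℝ (deriv φ) z := h2.restrictScalars ℝ
  have dcφ : DifferentiableAt ℝ (fun w => (starRingEnd ℂ) (φ w)) z := diff_conj h1
  have dN : DifferentiableAt ℝ (fun w => (starRingEnd ℂ) (φ w) * deriv φ w) z := dcφ.mul d2r
  have dQ : DifferentiableAt ℝ (fun w => (1:ℂ) - φ w * (starRingEnd ℂ) (φ w)) z :=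
    (dφr.mul dcφ).const_sub 1
  have dQi : DifferentiableAt ℝ (fun w => ((1:ℂ) - φ w * (starRingEnd ℂ) (φ w))⁻¹) z :=
    dQ.inv hQ
  have dT1 : DifferentiableAt ℝ
      (fun w : ℂ => 2⁻¹ * (1 - w * (starRingEnd ℂ) w) * (deriv (deriv φ) w / deriv φ w)) z :=
    dhalfP.mul dGr
  have dT12 : DifferentiableAt ℝ
      (fun w : ℂ => 2⁻¹ * (1 - w * (starRingEnd ℂ) w) * (deriv (deriv φ) w / deriv φ w)
        - (starRingEnd ℂ) w) z := dT1.sub dcz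
  have dPN : DifferentiableAt ℝ
      (fun w : ℂ => (1 - w * (starRingEnd ℂ) w) * ((starRingEnd ℂ) (φ w) * deriv φ w)) z :=
    dP.mul dN
  have dT3 : DifferentiableAt ℝ
      (fun w : ℂ => (1 - w * (starRingEnd ℂ) w) * ((starRingEnd ℂ) (φ w) * deriv φ w)
        * ((1:ℂ) - φ w * (starRingEnd ℂ) (φ w))⁻¹) z := dPN.mul dQi
  -- wDz values
  have e0 : wDz (fun w : ℂ => (starRingEnd ℂ) w) z = 0 := wdz_conj differentiableAt_fun_id
  have eid : wDz (fun w : ℂ => w) z = 1 := by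
    rw [wdz_holo differentiableAt_fun_id]; simp
  have eP : wDz (fun w : ℂ => 1 - w * (starRingEnd ℂ) w) z = -((starRingEnd ℂ) z) := by
    rw [wdz_sub (g := fun w => w * (starRingEnd ℂ) w) (differentiableAt_const 1) (differentiableAt_fun_id.mul dcz), wdz_const,
      wdz_mul differentiableAt_fun_id dcz, e0, eid]
    ring
  have eG : wDz (fun w => deriv (deriv φ) w / deriv φ w) z
      = (deriv (deriv (deriv φ)) z * deriv φ z - deriv (deriv φ) z * deriv (deriv φ) z)
        / (deriv φ z)^2 := by
    rw [wdz_holo dG]; exact deriv_div h3 h2 hd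
  have ecφ : wDz (fun w => (starRingEnd ℂ) (φ w)) z = 0 := wdz_conj h1
  have eφ : wDz φ z = deriv φ z := wdz_holo h1
  have e2 : wDz (deriv φ) z = deriv (deriv φ) z := wdz_holo h2
  have eQ : wDz (fun w => (1:ℂ) - φ w * (starRingEnd ℂ) (φ w)) z
      = -((starRingEnd ℂ) (φ z) * deriv φ z) := by
    rw [wdz_sub (g := fun w => φ w * (starRingEnd ℂ) (φ w)) (differentiableAt_const 1) (dφr.mul dcφ), wdz_const, wdz_mul dφr dcφ, ecφ, eφ]
    ring
  have eQi : wDz (fun w => ((1:ℂ) - φ w * (starRingEnd ℂ) (φ w))⁻¹) z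
      = -(((1:ℂ) - φ z * (starRingEnd ℂ) (φ z))^2)⁻¹
        * -((starRingEnd ℂ) (φ z) * deriv φ z) := by
    rw [wdz_inv dQ hQ, eQ]
  -- rewrite Ah as a convenient expression
  have hAh : Ah φ = fun w =>
      (2⁻¹ * (1 - w * (starRingEnd ℂ) w) * (deriv (deriv φ) w / deriv φ w)
        - (starRingEnd ℂ) w)
      + (1 - w * (starRingEnd ℂ) w) * ((starRingEnd ℂ) (φ w) * deriv φ w)
        * ((1:ℂ) - φ w * (starRingEnd ℂ) (φ w))⁻¹ := by
    funext w
    simp only [Ah, coe_norm_sq]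
    ring
  simp only [hAh, Sh, coe_norm_sq]
  rw [wdz_add dT12 dT3, wdz_sub dT1 dcz, wdz_mul dhalfP dGr,
    wdz_mul (differentiableAt_const _) dP, wdz_mul dPN dQi, wdz_mul dP dN,
    wdz_mul dcφ d2r, wdz_const, eG, eP, eQi, ecφ, e2, e0]
  set a := φ z with ha
  set k := (starRingEnd ℂ) (φ z) with hk
  set c := (starRingEnd ℂ) z with hc
  set d1 := deriv φ z with hd1
  set d2 := deriv (deriv φ) z with hd2
  set d3 := deriv (deriv (deriv φ)) z with hd3
  exact key_alg z c a k d1 d2 d3 hd hQ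
end

section
/- For the Blaschke product φ(z) = (z² - c²)/(1 - c²z²) with 0 < c < 1, one has A_φ(z) = (1-|z|²)²/(2z(1+|z|²)) for all nonzero z in the unit disk; in particular A_φ never vanishes on 𝔻 \ {0}. -/
open Complex Metric Set Filter Asymptotics Topology

private lemma hasDerivAt_phi (k z : ℂ) (h : 1 - k*z^2 ≠ 0) :
    HasDerivAt (fun w => (w^2 - k)/(1 - k*w^2)) (2*z*(1-k^2)/(1-k*z^2)^2) z := by
  have h1 : HasDerivAt (fun w : ℂ => w^2 - k) (2*z) z := by
    simpa using ((hasDerivAt_pow 2 z).sub_const k)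
  have h2 : HasDerivAt (fun w : ℂ => 1 - k*w^2) (-(k*(2*z))) z := by
    simpa using (((hasDerivAt_pow 2 z).const_mul k).const_sub 1)
  have := h1.fun_div h2 h
  refine this.congr_deriv ?_
  field_simp
  ring

private lemma hasDerivAt_g (k z : ℂ) (h : 1 - k*z^2 ≠ 0) :
    HasDerivAt (fun w => 2*w*(1-k^2)/(1-k*w^2)^2)
      (2*(1-k^2)*(1+3*k*z^2)/(1-k*z^2)^3) z := by
  have h1 : HasDerivAt (fun w : ℂ => 2*w*(1-k^2)) (2*(1-k^2)) z := by
    simpa using (((hasDerivAt_id z).const_mul 2).mul_const (1-k^2))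
  have h2 : HasDerivAt (fun w : ℂ => (1-k*w^2)^2) (2*(1-k*z^2)*(-(k*(2*z)))) z := by
    have hb : HasDerivAt (fun w : ℂ => 1 - k*w^2) (-(k*(2*z))) z := by
      simpa using (((hasDerivAt_pow 2 z).const_mul k).const_sub 1)
    simpa using (hb.fun_pow 2)
  have := h1.fun_div h2 (pow_ne_zero 2 h)
  refine this.congr_deriv ?_
  field_simp
  ring

set_option maxHeartbeats 1600000 in
theorem blaschke_square_A_formula (c : ℝ) (hc : 0 < c) (hc1 : c < 1) :
    let φ : ℂ → ℂ := fun z => (z^2 - (c:ℂ)^2) / (1 - (c:ℂ)^2 * z^2)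
    ∀ z ∈ ball (0:ℂ) 1, z ≠ 0 →
      Ah φ z = (1 - (‖z‖:ℂ)^2)^2 / (2 * z * (1 + (‖z‖:ℂ)^2)) ∧ Ah φ z ≠ 0 := by
  intro φ z hz hz0
  set k : ℂ := (c:ℂ)^2 with hk
  have hz1 : ‖z‖ < 1 := by simpa using hz
  have hnorm : ‖k‖ < 1 := by
    simp only [hk, norm_pow, Complex.norm_real, Real.norm_eq_abs, abs_of_pos hc]
    nlinarith
  -- denominators
  have hc2 : c^2 < 1 := by nlinarith
  have hz2 : ‖z‖^2 < 1 := by nlinarith [norm_nonneg z]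
  have hden : (1:ℂ) - k*z^2 ≠ 0 := by
    have h2 : ‖k*z^2‖ < 1 := by
      simp only [hk, norm_mul, norm_pow, Complex.norm_real, Real.norm_eq_abs,
        abs_of_pos hc]
      nlinarith [sq_nonneg c]
    intro h
    rw [sub_eq_zero] at h
    rw [← h] at h2
    simp at h2
  have hdenc : (1:ℂ) - k*((starRingEnd ℂ) z)^2 ≠ 0 := by
    have h2 : ‖k*((starRingEnd ℂ) z)^2‖ < 1 := by
      simp only [hk, norm_mul, norm_pow, RCLike.norm_conj, Complex.norm_real,
        Real.norm_eq_abs, abs_of_pos hc]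
      nlinarith [sq_nonneg c]
    intro h
    rw [sub_eq_zero] at h
    rw [← h] at h2
    simp at h2
  have hzw : ((‖z‖:ℂ))^2 = z * (starRingEnd ℂ) z := by
    rw [← Complex.ofReal_pow, ← Complex.normSq_eq_norm_sq,
      ← Complex.mul_conj]
  have h1m : (1:ℂ) - z * (starRingEnd ℂ) z ≠ 0 := by
    rw [← hzw]
    have hr : (1:ℝ) - ‖z‖^2 ≠ 0 := by nlinarith [norm_nonneg z]
    have h2 := Complex.ofReal_ne_zero.mpr hr
    push_cast at h2
    exact h2
  have h1p : (1:ℂ) + z * (starRingEnd ℂ) z ≠ 0 := by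
    rw [← hzw]
    have hr : (1:ℝ) + ‖z‖^2 ≠ 0 := by nlinarith [norm_nonneg z]
    have h2 := Complex.ofReal_ne_zero.mpr hr
    push_cast at h2
    exact h2
  have hk1 : (1:ℂ) - k^2 ≠ 0 := by
    have hr : (1:ℝ) - (c^2)^2 ≠ 0 := by nlinarith [sq_nonneg c]
    have h2 := Complex.ofReal_ne_zero.mpr hr
    push_cast at h2
    simpa [hk] using h2
  -- first derivative
  have hdφ : deriv φ z = 2*z*(1-k^2)/(1-k*z^2)^2 := (hasDerivAt_phi k z hden).deriv
  -- second derivative via local equality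
  have hU : IsOpen {w : ℂ | (1:ℂ) - k*w^2 ≠ 0} := by
    have : Continuous fun w : ℂ => (1:ℂ) - k*w^2 := by continuity
    exact isOpen_compl_singleton.preimage this
  have hev : deriv φ =ᶠ[𝓝 z] fun w => 2*w*(1-k^2)/(1-k*w^2)^2 := by
    filter_upwards [hU.mem_nhds hden] with w hw
    exact (hasDerivAt_phi k w hw).deriv
  have hddφ : deriv (deriv φ) z = 2*(1-k^2)*(1+3*k*z^2)/(1-k*z^2)^3 := by
    rw [hev.deriv_eq]
    exact (hasDerivAt_g k z hden).deriv
  -- φ z and conj φ z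
  have hφz : φ z = (z^2 - k)/(1 - k*z^2) := rfl
  have hcφz : (starRingEnd ℂ) (φ z) =
      (((starRingEnd ℂ) z)^2 - k)/(1 - k*((starRingEnd ℂ) z)^2) := by
    simp [hφz, map_div₀, hk, Complex.conj_ofReal]
  have hφzw : ((‖φ z‖:ℂ))^2 = φ z * (starRingEnd ℂ) (φ z) := by
    rw [← Complex.ofReal_pow, ← Complex.normSq_eq_norm_sq,
      ← Complex.mul_conj]
  -- 1 - |φ z|^2 identity
  have hφden : (1:ℂ) - φ z * (starRingEnd ℂ) (φ z)
      = (1-k^2)*(1 - (z*(starRingEnd ℂ) z)^2)/((1-k*z^2)*(1-k*((starRingEnd ℂ) z)^2)) := by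
    rw [hφz, hcφz]
    rw [div_mul_div_comm, one_sub_div (mul_ne_zero hden hdenc)]
    congr 1
    ring
  have hφne : (1:ℂ) - (‖φ z‖:ℂ)^2 ≠ 0 := by
    rw [hφzw, hφden]
    apply div_ne_zero
    · apply mul_ne_zero hk1
      have : (1:ℂ) - (z*(starRingEnd ℂ) z)^2
          = (1 - z*(starRingEnd ℂ) z)*(1 + z*(starRingEnd ℂ) z) := by ring
      rw [this]
      exact mul_ne_zero h1m h1p
    · exact mul_ne_zero hden hdenc
  have hφpne : deriv φ z ≠ 0 := by
    rw [hdφ]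
    exact div_ne_zero (by exact mul_ne_zero (mul_ne_zero two_ne_zero hz0) hk1)
      (pow_ne_zero 2 hden)
  -- main formula
  have hmain : Ah φ z = (1 - (‖z‖:ℂ)^2)^2 / (2 * z * (1 + (‖z‖:ℂ)^2)) := by
    have hprod : (1:ℂ) - (z*(starRingEnd ℂ) z)^2 ≠ 0 := by
      have h2 : (1:ℂ) - (z*(starRingEnd ℂ) z)^2
          = (1 - z*(starRingEnd ℂ) z)*(1 + z*(starRingEnd ℂ) z) := by ring
      rw [h2]
      exact mul_ne_zero h1m h1p
    rw [Ah, hdφ, hddφ, hzw, hφzw, hφden, hcφz]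
    set w : ℂ := (starRingEnd ℂ) z with hw
    clear_value w
    clear_value k
    clear hev hdφ hddφ hφz hcφz hφzw hφden hφne hφpne hzw hU hnorm
    have hA : (2*z*(1-k^2))/(1-k*z^2)^2 ≠ 0 :=
      div_ne_zero (mul_ne_zero (mul_ne_zero two_ne_zero hz0) hk1) (pow_ne_zero 2 hden)
    have hB : z*(1-k*z^2) ≠ 0 := mul_ne_zero hz0 hden
    have e1 : 2*(1-k^2)*(1+3*k*z^2)/(1-k*z^2)^3 / (2*z*(1-k^2)/(1-k*z^2)^2)
        = (1+3*k*z^2)/(z*(1-k*z^2)) := by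
      rw [div_eq_div_iff hA hB]
      field_simp
    have hQ : (1-k^2)*(1-(z*w)^2)/((1-k*z^2)*(1-k*w^2)) ≠ 0 :=
      div_ne_zero (mul_ne_zero hk1 hprod) (mul_ne_zero hden hdenc)
    have hC : (1-k*z^2)*(1+z*w) ≠ 0 := mul_ne_zero hden h1p
    have e3 : (1 - z*w) * ((w^2 - k)/(1 - k*w^2)) * (2*z*(1-k^2)/(1-k*z^2)^2)
          / ((1-k^2)*(1-(z*w)^2)/((1-k*z^2)*(1-k*w^2)))
        = 2*z*(w^2-k)/((1-k*z^2)*(1+z*w)) := by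
      rw [div_eq_div_iff hQ hC]
      field_simp
      ring
    rw [e1, e3]
    have hden' : 1 - z^2*k ≠ 0 := by rwa [mul_comm] at hden
    field_simp
    ring
  refine ⟨hmain, ?_⟩
  rw [hmain]
  apply div_ne_zero
  · exact pow_ne_zero 2 (by rw [hzw]; exact h1m)
  · refine mul_ne_zero (mul_ne_zero two_ne_zero hz0) ?_
    rw [hzw]; exact h1p
end

section
/- Let φ(z) = e^{-g(z)} with g(z) = ((1+z)/(1-z))^a, 0 < a < 1 (principal branch). Then φ maps the unit disk into itself and |D_φ(z)| ≤ a for all z ∈ 𝔻. -/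
open Complex Metric Set Filter Asymptotics Topology

private lemma exp_lens_final_ineq (a r θ m B : ℝ) (ha : 0 < a) (ha1 : a < 1)
    (hr0 : 0 < r) (hB0 : 0 < B) (harg : |θ| < Real.pi / 2)
    (hwreB : 1 - m ^ 2 = r * Real.cos θ * B ^ 2) :
    (1 - m ^ 2) * (Real.exp (-(r ^ a * Real.cos (a * θ))) * (a * r ^ (a - 1) * (2 / B ^ 2))) /
      (1 - Real.exp (-(r ^ a * Real.cos (a * θ))) ^ 2) ≤ a := by
  set u : ℝ := r ^ a * Real.cos (a * θ) with hu
  have haarg : |a * θ| < Real.pi / 2 := by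
    rw [abs_mul, abs_of_pos ha]
    calc a * |θ| ≤ 1 * |θ| := mul_le_mul_of_nonneg_right ha1.le (abs_nonneg _)
      _ < Real.pi / 2 := by rw [one_mul]; exact harg
  have hu0 : 0 < u := by
    apply mul_pos (Real.rpow_pos_of_pos hr0 a)
    apply Real.cos_pos_of_mem_Ioo
    constructor
    · linarith [neg_abs_le (a * θ)]
    · linarith [le_abs_self (a * θ)]
  set E : ℝ := Real.exp (-u) with hE
  have hE0 : 0 < E := Real.exp_pos _
  have hE1 : E < 1 := by
    rw [hE, ← Real.exp_zero]
    exact Real.exp_lt_exp.2 (by linarith)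
  have hsinh : 1 - E ^ 2 = 2 * Real.sinh u * E := by
    rw [hE, Real.sinh_eq]
    have h : Real.exp u * Real.exp (-u) = 1 := by rw [← Real.exp_add]; simp
    nlinarith [h]
  have hEpos : 0 < 1 - E ^ 2 := by nlinarith
  have hcos : Real.cos θ ≤ Real.cos (a * θ) := by
    rw [← Real.cos_abs θ, ← Real.cos_abs (a * θ)]
    apply Real.cos_le_cos_of_nonneg_of_le_pi (abs_nonneg _)
    · nlinarith [Real.pi_pos]
    · rw [abs_mul, abs_of_pos ha]
      calc a * |θ| ≤ 1 * |θ| := mul_le_mul_of_nonneg_right ha1.le (abs_nonneg _)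
        _ = |θ| := one_mul _
  have hkey : r ^ a * Real.cos θ ≤ Real.sinh u := by
    calc r ^ a * Real.cos θ ≤ r ^ a * Real.cos (a * θ) :=
          mul_le_mul_of_nonneg_left hcos (Real.rpow_pos_of_pos hr0 a).le
      _ = u := hu.symm
      _ ≤ Real.sinh u := Real.self_le_sinh_iff.2 hu0.le
  have hra : r ^ (a - 1) * r = r ^ a := by
    rw [← Real.rpow_add_one hr0.ne' (a - 1)]
    ring_nf
  rw [div_le_iff₀ hEpos, hsinh, hwreB]
  have hlhs : r * Real.cos θ * B ^ 2 * (E * (a * r ^ (a - 1) * (2 / B ^ 2)))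
      = a * (r ^ a * Real.cos θ) * (2 * E) := by
    rw [← hra]
    field_simp
  rw [hlhs]
  nlinarith [mul_le_mul_of_nonneg_left hkey ha.le, hE0]

private lemma exp_lens_key (a : ℝ) (ha : 0 < a) (ha1 : a < 1) (z : ℂ)
    (hz : ‖z‖ < 1) :
    ‖Complex.exp (-(((1 + z) / (1 - z)) ^ (a : ℂ)))‖ < 1 ∧
    ‖Dh (fun z => Complex.exp (-(((1 + z) / (1 - z)) ^ (a : ℂ)))) z‖ ≤ a := by
  have h1 : (1 - z) ≠ 0 := by
    intro h
    have : z = 1 := by linear_combination -h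
    simp [this] at hz
  have h2 : (1 + z) ≠ 0 := by
    intro h
    have : z = -1 := by linear_combination h
    simp [this] at hz
  have hw0 : (1 + z) / (1 - z) ≠ 0 := div_ne_zero h2 h1
  have hm : Complex.normSq z < 1 := by
    rw [← Complex.sq_norm]; nlinarith [norm_nonneg z]
  have hns : 0 < Complex.normSq (1 - z) := Complex.normSq_pos.2 h1
  have hwre : ((1 + z) / (1 - z)).re = (1 - Complex.normSq z) / Complex.normSq (1 - z) := by
    simp [Complex.div_re, Complex.normSq_apply]
    ring
  have hwre' : 0 < ((1 + z) / (1 - z)).re := by rw [hwre]; exact div_pos (by linarith) hns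
  have hr0 : 0 < ‖(1 + z) / (1 - z)‖ := norm_pos_iff.mpr hw0
  have harg : |Complex.arg ((1 + z) / (1 - z))| < Real.pi / 2 :=
    Complex.abs_arg_lt_pi_div_two_iff.2 (Or.inl hwre')
  have haarg : |a * Complex.arg ((1 + z) / (1 - z))| < Real.pi / 2 := by
    rw [abs_mul, abs_of_pos ha]
    calc a * |Complex.arg ((1 + z) / (1 - z))|
        ≤ 1 * |Complex.arg ((1 + z) / (1 - z))| :=
          mul_le_mul_of_nonneg_right ha1.le (abs_nonneg _)
      _ < Real.pi / 2 := by rw [one_mul]; exact harg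
  have hg : ((1 + z) / (1 - z)) ^ (a:ℂ)
      = Complex.exp ((a:ℂ) * Complex.log ((1 + z) / (1 - z))) := by
    rw [Complex.cpow_def_of_ne_zero hw0, mul_comm]
  have hre_g : (((1 + z) / (1 - z)) ^ (a:ℂ)).re
      = ‖(1 + z) / (1 - z)‖ ^ a
        * Real.cos (a * Complex.arg ((1 + z) / (1 - z))) := by
    rw [hg, Complex.exp_re]
    congr 1
    · rw [Real.rpow_def_of_pos hr0]
      congr 1
      simp [Complex.log_re]
      ring
    · congr 1
      simp [Complex.log_im]
  have hu0 : 0 < ‖(1 + z) / (1 - z)‖ ^ a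
      * Real.cos (a * Complex.arg ((1 + z) / (1 - z))) := by
    apply mul_pos (Real.rpow_pos_of_pos hr0 a)
    apply Real.cos_pos_of_mem_Ioo
    constructor
    · linarith [neg_abs_le (a * Complex.arg ((1 + z) / (1 - z)))]
    · linarith [le_abs_self (a * Complex.arg ((1 + z) / (1 - z)))]
  have hφabs : ‖Complex.exp (-(((1 + z) / (1 - z)) ^ (a:ℂ)))‖
      = Real.exp (-(‖(1 + z) / (1 - z)‖ ^ a
        * Real.cos (a * Complex.arg ((1 + z) / (1 - z))))) := by
    rw [Complex.norm_exp]
    congr 1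
    rw [Complex.neg_re, hre_g]
  have hE1 : Real.exp (-(‖(1 + z) / (1 - z)‖ ^ a
      * Real.cos (a * Complex.arg ((1 + z) / (1 - z))))) < 1 := by
    rw [← Real.exp_zero]
    exact Real.exp_lt_exp.2 (by linarith)
  have hE0 : (0:ℝ) < Real.exp (-(‖(1 + z) / (1 - z)‖ ^ a
      * Real.cos (a * Complex.arg ((1 + z) / (1 - z))))) := Real.exp_pos _
  constructor
  · rw [hφabs]; exact hE1
  have hslit : (1 + z) / (1 - z) ∈ Complex.slitPlane := Complex.mem_slitPlane_iff.2 (Or.inl hwre')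
  have hA : HasDerivAt (fun z : ℂ => 1 + z) 1 z := (hasDerivAt_id z).const_add 1
  have hB : HasDerivAt (fun z : ℂ => 1 - z) (-1) z := (hasDerivAt_id z).const_sub 1
  have hdiv' : HasDerivAt (fun z : ℂ => (1 + z) / (1 - z)) (2 / (1 - z) ^ 2) z := by
    refine (hA.div hB h1).congr_deriv ?_
    ring
  have hdg : HasDerivAt (fun z : ℂ => ((1 + z) / (1 - z)) ^ (a : ℂ))
      ((a:ℂ) * ((1 + z) / (1 - z)) ^ ((a:ℂ) - 1) * (2 / (1 - z) ^ 2)) z := hdiv'.cpow_const hslit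
  have hderiv : deriv (fun z : ℂ => Complex.exp (-(((1 + z) / (1 - z)) ^ (a : ℂ)))) z
      = Complex.exp (-(((1 + z) / (1 - z)) ^ (a:ℂ)))
        * (-((a:ℂ) * ((1 + z) / (1 - z)) ^ ((a:ℂ) - 1) * (2 / (1 - z) ^ 2))) :=
    hdg.neg.cexp.deriv
  have hB0 : 0 < ‖1 - z‖ := norm_pos_iff.mpr h1
  have hcpow : ‖((1 + z) / (1 - z)) ^ ((a:ℂ) - 1)‖
      = ‖(1 + z) / (1 - z)‖ ^ (a - 1) := by
    have h : (a:ℂ) - 1 = ((a - 1 : ℝ) : ℂ) := by push_cast; ring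
    rw [h, Complex.norm_cpow_real]
  have habs_deriv : ‖Complex.exp (-(((1 + z) / (1 - z)) ^ (a:ℂ)))
      * (-((a:ℂ) * ((1 + z) / (1 - z)) ^ ((a:ℂ) - 1) * (2 / (1 - z) ^ 2)))‖
      = Real.exp (-(‖(1 + z) / (1 - z)‖ ^ a
          * Real.cos (a * Complex.arg ((1 + z) / (1 - z)))))
        * (a * ‖(1 + z) / (1 - z)‖ ^ (a - 1)
          * (2 / ‖1 - z‖ ^ 2)) := by
    have h22 : ‖2 / (1 - z) ^ 2‖ = 2 / ‖1 - z‖ ^ 2 := by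
      rw [norm_div, norm_pow, Complex.norm_two]
    have haa : ‖((a:ℝ):ℂ)‖ = a := by
      rw [Complex.norm_real, Real.norm_eq_abs, abs_of_pos ha]
    rw [norm_mul, norm_neg, norm_mul, norm_mul, hcpow, hφabs, h22, haa]
  have hDh : ‖Dh (fun z => Complex.exp (-(((1 + z) / (1 - z)) ^ (a : ℂ)))) z‖
      = (1 - ‖z‖ ^ 2)
        * (Real.exp (-(‖(1 + z) / (1 - z)‖ ^ a
            * Real.cos (a * Complex.arg ((1 + z) / (1 - z)))))
          * (a * ‖(1 + z) / (1 - z)‖ ^ (a - 1) * (2 / ‖1 - z‖ ^ 2)))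
        / (1 - Real.exp (-(‖(1 + z) / (1 - z)‖ ^ a
            * Real.cos (a * Complex.arg ((1 + z) / (1 - z))))) ^ 2) := by
    rw [Dh, norm_div, norm_mul, hderiv, habs_deriv]
    congr 2
    · have h : (1 : ℂ) - (‖z‖ : ℂ) ^ 2 = ((1 - ‖z‖ ^ 2 : ℝ) : ℂ) := by
        push_cast; ring
      rw [h, Complex.norm_real, Real.norm_eq_abs, abs_of_pos]
      nlinarith [norm_nonneg z]
    · have hφz : ‖Complex.exp (-(((1 + z) / (1 - z)) ^ (a : ℂ)))‖
          = Real.exp (-(‖(1 + z) / (1 - z)‖ ^ a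
            * Real.cos (a * Complex.arg ((1 + z) / (1 - z))))) := by
        rw [hφabs]
      rw [hφz]
      have h : (1 : ℂ) - ((Real.exp (-(‖(1 + z) / (1 - z)‖ ^ a
          * Real.cos (a * Complex.arg ((1 + z) / (1 - z))))) : ℝ) : ℂ) ^ 2
          = ((1 - Real.exp (-(‖(1 + z) / (1 - z)‖ ^ a
            * Real.cos (a * Complex.arg ((1 + z) / (1 - z))))) ^ 2 : ℝ) : ℂ) := by
        push_cast; ring
      rw [h, Complex.norm_real, Real.norm_eq_abs, abs_of_pos]
      nlinarith
  rw [hDh]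
  apply exp_lens_final_ineq a _ _ _ _ ha ha1 hr0 hB0 harg
  have hc : Real.cos (Complex.arg ((1 + z) / (1 - z)))
      = ((1 + z) / (1 - z)).re / ‖(1 + z) / (1 - z)‖ := Complex.cos_arg hw0
  have hB2 : ‖1 - z‖ ^ 2 = Complex.normSq (1 - z) := Complex.sq_norm _
  have hm2 : ‖z‖ ^ 2 = Complex.normSq z := Complex.sq_norm z
  have hrc : ‖(1 + z) / (1 - z)‖ * Real.cos (Complex.arg ((1 + z) / (1 - z)))
      = ((1 + z) / (1 - z)).re := by
    rw [hc, mul_comm]; exact div_mul_cancel₀ _ hr0.ne'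
  rw [mul_comm (‖(1 + z) / (1 - z)‖ ^ a)] at *
  rw [hm2, hB2, hrc, hwre]
  field_simp

theorem exp_lens_map_bound (a : ℝ) (ha : 0 < a) (ha1 : a < 1) :
    let g : ℂ → ℂ := fun z => ((1 + z) / (1 - z)) ^ (a : ℂ)
    let φ : ℂ → ℂ := fun z => Complex.exp (-(g z))
    MapsTo φ (ball (0:ℂ) 1) (ball (0:ℂ) 1) ∧
    ∀ z ∈ ball (0:ℂ) 1, ‖Dh φ z‖ ≤ a := by
  intro g φ
  constructor
  · intro z hz
    rw [mem_ball, dist_zero_right] at hz ⊢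
    exact (exp_lens_key a ha ha1 z hz).1
  · intro z hz
    rw [mem_ball, dist_zero_right] at hz
    exact (exp_lens_key a ha ha1 z hz).2
end

section
/- Let φ(z) = e^{-g(z)} with g(z) = ((1+z)/(1-z))^a, 0 < a < 1 (principal branch). For every ζ on the unit circle with ζ ≠ -1, |D_φ(z)| → 0 as z → ζ within the unit disk. -/
open Complex Metric Set Filter Asymptotics Topology

namespace ExpLensAux

/-- The explicit derivative of `φ`. -/
noncomputable def Dexpr (a : ℝ) (z : ℂ) : ℂ :=
  -((a : ℂ) * ((1 + z) / (1 - z)) ^ ((a : ℂ) - 1) * (2 / (1 - z) ^ 2)) *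
    Complex.exp (-(((1 + z) / (1 - z)) ^ (a : ℂ)))

lemma wmap_re (z : ℂ) :
    ((1 + z) / (1 - z)).re = (1 - Complex.normSq z) / Complex.normSq (1 - z) := by
  rw [Complex.div_re, ← add_div]
  congr 1
  simp only [Complex.normSq_apply, Complex.add_re, Complex.add_im, Complex.sub_re,
    Complex.sub_im, Complex.one_re, Complex.one_im]
  ring

lemma wmap_im (z : ℂ) :
    ((1 + z) / (1 - z)).im = (2 * z.im) / Complex.normSq (1 - z) := by
  rw [Complex.div_im, div_sub_div_same]
  congr 1
  simp only [Complex.add_re, Complex.add_im, Complex.sub_re, Complex.sub_im,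
    Complex.one_re, Complex.one_im]
  ring

lemma one_sub_ne_zero {z : ℂ} (hz : ‖z‖ < 1) : (1 : ℂ) - z ≠ 0 := by
  intro h
  have hz1 : z = 1 := by linear_combination -h
  simp [hz1] at hz

lemma slit_of_ball {z : ℂ} (hz : ‖z‖ < 1) :
    (1 + z) / (1 - z) ∈ Complex.slitPlane := by
  rw [Complex.mem_slitPlane_iff]
  left
  rw [wmap_re]
  apply div_pos
  · have h := Complex.normSq_eq_norm_sq z
    nlinarith [norm_nonneg z]
  · exact Complex.normSq_pos.mpr (one_sub_ne_zero hz)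

lemma hasDerivAt_phi (a : ℝ) {z : ℂ} (h1 : (1 : ℂ) - z ≠ 0)
    (hs : (1 + z) / (1 - z) ∈ Complex.slitPlane) :
    HasDerivAt (fun z => Complex.exp (-(((1 + z) / (1 - z)) ^ (a : ℂ)))) (Dexpr a z) z := by
  have hu : HasDerivAt (fun z : ℂ => 1 + z) 1 z := by
    simpa using (hasDerivAt_id z).const_add (1 : ℂ)
  have hv : HasDerivAt (fun z : ℂ => 1 - z) (-1) z := by
    simpa using (hasDerivAt_id z).const_sub (1 : ℂ)
  have hw : HasDerivAt (fun z : ℂ => (1 + z) / (1 - z)) (2 / (1 - z) ^ 2) z := by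
    have hd : HasDerivAt (fun y : ℂ => (1 + y) / (1 - y)) _ z := hu.div hv h1
    convert hd using 1
    ring
  have hg : HasDerivAt (fun z : ℂ => ((1 + z) / (1 - z)) ^ (a : ℂ))
      ((a : ℂ) * ((1 + z) / (1 - z)) ^ ((a : ℂ) - 1) * (2 / (1 - z) ^ 2)) z :=
    hw.cpow_const hs
  have h : HasDerivAt (fun z => Complex.exp (-(((1 + z) / (1 - z)) ^ (a : ℂ)))) _ z := hg.neg.cexp
  convert h using 1
  unfold Dexpr
  simp only [Pi.neg_apply]
  ring

lemma cos_half_pos {a : ℝ} (ha : 0 < a) (ha1 : a < 1) : 0 < Real.cos (a * (Real.pi / 2)) := by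
  have hπ := Real.pi_pos
  exact Real.cos_pos_of_mem_Ioo ⟨by nlinarith, by nlinarith⟩

lemma re_cpow {a : ℝ} (ha : 0 < a) (ha1 : a < 1) {w : ℂ} (hw : w ≠ 0) (hre : 0 ≤ w.re) :
    Real.cos (a * (Real.pi / 2)) * ‖w‖ ^ a ≤ (w ^ (a : ℂ)).re := by
  rw [Complex.cpow_ofReal_re]
  have hπ := Real.pi_pos
  have harg : |w.arg| ≤ Real.pi / 2 := Complex.abs_arg_le_pi_div_two_iff.mpr hre
  have h1 : |w.arg * a| ≤ a * (Real.pi / 2) := by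
    rw [abs_mul, abs_of_pos ha]
    nlinarith [abs_nonneg w.arg]
  have h2 : Real.cos (a * (Real.pi / 2)) ≤ Real.cos (w.arg * a) := by
    rw [← Real.cos_abs (w.arg * a)]
    exact Real.cos_le_cos_of_nonneg_of_le_pi (abs_nonneg _) (by nlinarith) h1
  have h3 : (0 : ℝ) ≤ ‖w‖ ^ a := Real.rpow_nonneg (norm_nonneg w) a
  rw [mul_comm]
  exact mul_le_mul_of_nonneg_left h2 h3

set_option maxHeartbeats 1000000 in
lemma key_bound {a : ℝ} (ha : 0 < a) (ha1 : a < 1) {z : ℂ} (hz : ‖z‖ < 1)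
    (hr1 : ‖1 - z‖ < 1)
    (hc1 : 1 ≤ Real.cos (a * (Real.pi / 2)) * ‖1 - z‖ ^ (-a)) :
    ‖Dh (fun z => Complex.exp (-(((1 + z) / (1 - z)) ^ (a : ℂ)))) z‖ ≤
      8 * a * ‖1 - z‖ ^ (-a) *
        Real.exp (-(Real.cos (a * (Real.pi / 2)) * ‖1 - z‖ ^ (-a))) := by
  set c := Real.cos (a * (Real.pi / 2)) with hc
  have hcpos : 0 < c := cos_half_pos ha ha1
  have h1 : (1 : ℂ) - z ≠ 0 := one_sub_ne_zero hz
  set r := ‖1 - z‖ with hrdef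
  have hr : 0 < r := norm_pos_iff.mpr h1
  set w := (1 + z) / (1 - z) with hwdef
  have hwre : 0 < w.re := by
    rw [hwdef, wmap_re]
    apply div_pos
    · have h := Complex.normSq_eq_norm_sq z
      nlinarith [norm_nonneg z]
    · exact Complex.normSq_pos.mpr h1
  have hslit : w ∈ Complex.slitPlane := Complex.mem_slitPlane_iff.mpr (Or.inl hwre)
  have hw0 : w ≠ 0 := Complex.slitPlane_ne_zero hslit
  have h2z : 1 ≤ ‖1 + z‖ := by
    have h := norm_sub_norm_le (2 : ℂ) (1 - z)
    rw [show (2 : ℂ) - (1 - z) = 1 + z by ring] at h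
    have h2 : ‖(2 : ℂ)‖ = 2 := by norm_num [Complex.norm_two]
    rw [h2] at h
    linarith
  have hwabs_lb : 1 / r ≤ ‖w‖ := by
    rw [hwdef, norm_div, ← hrdef]
    gcongr
  have hrpow_pos : 0 < r ^ (-a) := Real.rpow_pos_of_pos hr _
  have hga : c * r ^ (-a) ≤ (w ^ (a : ℂ)).re := by
    have hA := re_cpow ha ha1 hw0 hwre.le
    have hB : r ^ (-a) ≤ ‖w‖ ^ a := by
      have heq : r ^ (-a) = (1 / r) ^ a := by
        rw [one_div, Real.inv_rpow hr.le, ← Real.rpow_neg hr.le]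
      rw [heq]
      exact Real.rpow_le_rpow (by positivity) hwabs_lb ha.le
    calc c * r ^ (-a) ≤ c * ‖w‖ ^ a := by
          exact mul_le_mul_of_nonneg_left hB hcpos.le
      _ ≤ (w ^ (a : ℂ)).re := hA
  have hReg_pos : 0 < (w ^ (a : ℂ)).re :=
    lt_of_lt_of_le (mul_pos hcpos hrpow_pos) hga
  have hE1 : Real.exp (-(w ^ (a : ℂ)).re) ≤ Real.exp (-(c * r ^ (-a))) :=
    Real.exp_le_exp.mpr (by linarith)
  have hEhalf : Real.exp (-(c * r ^ (-a))) ≤ 1 / 2 := by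
    have he1 : Real.exp (-(c * r ^ (-a))) ≤ Real.exp (-1) :=
      Real.exp_le_exp.mpr (by linarith)
    have h3 : (2 : ℝ) ≤ Real.exp 1 := by
      have := Real.add_one_le_exp 1
      linarith
    have h4 : Real.exp (-1) ≤ 1 / 2 := by
      rw [Real.exp_neg]
      rw [inv_le_comm₀ (Real.exp_pos 1) (by norm_num)]
      linarith
    linarith
  have hB : ‖w ^ ((a : ℂ) - 1)‖ = ‖w‖ ^ (a - 1) := by
    rw [Complex.norm_cpow_of_ne_zero hw0]
    simp
  have hE : ‖Complex.exp (-(w ^ (a : ℂ)))‖ = Real.exp (-(w ^ (a : ℂ)).re) := by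
    rw [Complex.norm_exp, Complex.neg_re]
  have hderiv : deriv (fun z => Complex.exp (-(((1 + z) / (1 - z)) ^ (a : ℂ)))) z = Dexpr a z :=
    (hasDerivAt_phi a h1 hslit).deriv
  have hDexpr_eq : Dexpr a z
      = -((a : ℂ) * w ^ ((a : ℂ) - 1) * (2 / (1 - z) ^ 2)) * Complex.exp (-(w ^ (a : ℂ))) := by
    rw [hwdef]; rfl
  have habs_deriv : ‖Dexpr a z‖
      = a * ‖w‖ ^ (a - 1) * (2 / r ^ 2) * Real.exp (-(w ^ (a : ℂ)).re) := by
    rw [hDexpr_eq, norm_mul, norm_neg, norm_mul, norm_mul, norm_div, norm_pow, hB, hE,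
      ← hrdef]
    have haa : ‖(a : ℂ)‖ = a := by
      rw [Complex.norm_real, Real.norm_eq_abs, abs_of_pos ha]
    rw [haa]
    norm_num [Complex.norm_two]
  have hEφ : ‖Complex.exp (-(((1 + z) / (1 - z)) ^ (a : ℂ)))‖
      = Real.exp (-(w ^ (a : ℂ)).re) := by
    rw [← hwdef, hE]
  have habs : ‖Dh (fun z => Complex.exp (-(((1 + z) / (1 - z)) ^ (a : ℂ)))) z‖
      = (1 - ‖z‖ ^ 2) * ‖Dexpr a z‖
        / (1 - Real.exp (-(w ^ (a : ℂ)).re) ^ 2) := by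
    have hφlt : Real.exp (-(w ^ (a : ℂ)).re) < 1 :=
      Real.exp_lt_one_iff.mpr (by linarith)
    simp only [Dh]
    rw [hderiv, norm_div, norm_mul]
    congr 1
    · congr 1
      rw [show (1 - (‖z‖ : ℂ) ^ 2) = ((1 - ‖z‖ ^ 2 : ℝ) : ℂ) by push_cast; ring,
        Complex.norm_real, Real.norm_eq_abs,
        _root_.abs_of_nonneg (by nlinarith [norm_nonneg z])]
    · rw [hEφ,
        show (1 - ((Real.exp (-(w ^ (a : ℂ)).re) : ℝ) : ℂ) ^ 2)
          = ((1 - Real.exp (-(w ^ (a : ℂ)).re) ^ 2 : ℝ) : ℂ) by push_cast; ring,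
        Complex.norm_real, Real.norm_eq_abs, _root_.abs_of_nonneg (by nlinarith [Real.exp_pos (-(w ^ (a : ℂ)).re)])]
  rw [habs, habs_deriv]
  have hEd : (1 : ℝ) / 2 ≤ 1 - Real.exp (-(w ^ (a : ℂ)).re) ^ 2 := by
    have e1 : Real.exp (-(w ^ (a : ℂ)).re) ≤ 1 / 2 := le_trans hE1 hEhalf
    have e0 : 0 < Real.exp (-(w ^ (a : ℂ)).re) := Real.exp_pos _
    nlinarith
  have hwabs_pow_nonneg : 0 ≤ ‖w‖ ^ (a - 1) :=
    Real.rpow_nonneg (norm_nonneg w) _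
  have hnum : (1 - ‖z‖ ^ 2)
        * (a * ‖w‖ ^ (a - 1) * (2 / r ^ 2) * Real.exp (-(w ^ (a : ℂ)).re))
      ≤ (2 * r) * (a * r ^ (1 - a) * (2 / r ^ 2) * Real.exp (-(c * r ^ (-a)))) := by
    have b1 : 1 - ‖z‖ ^ 2 ≤ 2 * r := by
      have t0 := norm_sub_norm_le (1 : ℂ) z
      simp only [norm_one] at t0
      rw [← hrdef] at t0
      nlinarith [norm_nonneg z]
    have b2 : ‖w‖ ^ (a - 1) ≤ r ^ (1 - a) := by
      have h1r : (0 : ℝ) < 1 / r := by positivity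
      have hmono := Real.rpow_le_rpow_of_nonpos h1r hwabs_lb (by linarith : a - 1 ≤ 0)
      have heq : (1 / r : ℝ) ^ (a - 1) = r ^ (1 - a) := by
        rw [one_div, Real.inv_rpow hr.le, ← Real.rpow_neg hr.le]
        ring_nf
      linarith [heq ▸ hmono]
    have hnn : (0 : ℝ) ≤ 1 - ‖z‖ ^ 2 := by nlinarith [norm_nonneg z]
    apply mul_le_mul b1
    · apply mul_le_mul
      · apply mul_le_mul
        · exact mul_le_mul_of_nonneg_left b2 ha.le
        · exact le_rfl
        · positivity
        · positivity
      · exact hE1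
      · positivity
      · positivity
    · positivity
    · positivity
  have hrr : (2 * r) * (a * r ^ (1 - a) * (2 / r ^ 2) * Real.exp (-(c * r ^ (-a)))) / (1 / 2)
      = 8 * a * r ^ (-a) * Real.exp (-(c * r ^ (-a))) := by
    have hx : r * r ^ (1 - a) / r ^ 2 = r ^ (-a) := by
      rw [← Real.rpow_natCast r 2]
      rw [show r * r ^ (1 - a) = r ^ (1 : ℝ) * r ^ (1 - a) by rw [Real.rpow_one]]
      rw [← Real.rpow_add hr, ← Real.rpow_sub hr]
      congr 1
      push_cast
      ring
    calc (2 * r) * (a * r ^ (1 - a) * (2 / r ^ 2) * Real.exp (-(c * r ^ (-a)))) / (1 / 2)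
        = 8 * a * (r * r ^ (1 - a) / r ^ 2) * Real.exp (-(c * r ^ (-a))) := by ring
      _ = 8 * a * r ^ (-a) * Real.exp (-(c * r ^ (-a))) := by rw [hx]
  calc (1 - ‖z‖ ^ 2)
        * (a * ‖w‖ ^ (a - 1) * (2 / r ^ 2) * Real.exp (-(w ^ (a : ℂ)).re))
        / (1 - Real.exp (-(w ^ (a : ℂ)).re) ^ 2)
      ≤ (2 * r) * (a * r ^ (1 - a) * (2 / r ^ 2) * Real.exp (-(c * r ^ (-a)))) / (1 / 2) := by
        apply div_le_div₀ _ hnum (by norm_num) hEd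
        positivity
    _ = 8 * a * r ^ (-a) * Real.exp (-(c * r ^ (-a))) := hrr

end ExpLensAux

open ExpLensAux

set_option maxHeartbeats 1000000 in
theorem exp_lens_map_boundary_limit (a : ℝ) (ha : 0 < a) (ha1 : a < 1) :
    let g : ℂ → ℂ := fun z => ((1 + z) / (1 - z)) ^ (a : ℂ)
    let φ : ℂ → ℂ := fun z => Complex.exp (-(g z))
    ∀ ζ : ℂ, ‖ζ‖ = 1 → ζ ≠ -1 →
      Tendsto (fun z => ‖Dh φ z‖) (𝓝[ball (0:ℂ) 1] ζ) (𝓝 0) := by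
  intro g φ ζ hζ hζneg
  have hφeq : φ = fun z => Complex.exp (-(((1 + z) / (1 - z)) ^ (a : ℂ))) := rfl
  rw [hφeq]
  set c := Real.cos (a * (Real.pi / 2)) with hc
  have hcpos : 0 < c := cos_half_pos ha ha1
  have hπ := Real.pi_pos
  by_cases hζ1 : ζ = (1 : ℂ)
  · subst hζ1
    have hone : (1 : ℂ) ∉ ball (0 : ℂ) 1 := by simp
    have hnorm0 : Tendsto (fun z : ℂ => ‖1 - z‖) (𝓝[ball (0:ℂ) 1] 1) (𝓝[>] 0) := by
      rw [tendsto_nhdsWithin_iff]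
      constructor
      · have hcont : Continuous (fun z : ℂ => ‖1 - z‖) :=
          continuous_norm.comp (continuous_const.sub continuous_id)
        have h := (hcont.tendsto 1).mono_left (nhdsWithin_le_nhds (s := ball (0:ℂ) 1))
        simpa using h
      · filter_upwards [self_mem_nhdsWithin] with z hzb
        have hz1 : z ≠ 1 := by rintro rfl; exact hone hzb
        have : (1 : ℂ) - z ≠ 0 := sub_ne_zero.mpr (Ne.symm hz1)
        simpa [mem_Ioi] using norm_pos_iff.mpr this
    have hu : Tendsto (fun z : ℂ => c * ‖1 - z‖ ^ (-a))
        (𝓝[ball (0:ℂ) 1] 1) atTop := by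
      have h1 : Tendsto (fun r : ℝ => c * r ^ (-a)) (𝓝[>] (0:ℝ)) atTop := by
        apply Tendsto.const_mul_atTop hcpos
        have h2 := (tendsto_rpow_atTop ha).comp tendsto_inv_nhdsGT_zero
        apply h2.congr'
        filter_upwards [self_mem_nhdsWithin] with r hrpos
        simp only [Function.comp_apply]
        rw [Real.inv_rpow (le_of_lt hrpos), ← Real.rpow_neg (le_of_lt hrpos)]
      exact h1.comp hnorm0
    have hte : Tendsto (fun t : ℝ => t * Real.exp (-t)) atTop (𝓝 0) := by
      simpa using Real.tendsto_pow_mul_exp_neg_atTop_nhds_zero 1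
    have hbound : Tendsto (fun z : ℂ => 8 * a / c *
        ((c * ‖1 - z‖ ^ (-a)) *
          Real.exp (-(c * ‖1 - z‖ ^ (-a)))))
        (𝓝[ball (0:ℂ) 1] 1) (𝓝 0) := by
      have h := ((hte.comp hu).const_mul (8 * a / c))
      simpa using h
    apply squeeze_zero' (Eventually.of_forall fun z => norm_nonneg _) _ hbound
    have hev1 : ∀ᶠ z : ℂ in 𝓝[ball (0:ℂ) 1] 1, ‖1 - z‖ < 1 :=
      (hnorm0.mono_right nhdsWithin_le_nhds).eventually (eventually_lt_nhds one_pos)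
    have hev2 : ∀ᶠ z : ℂ in 𝓝[ball (0:ℂ) 1] 1, 1 ≤ c * ‖1 - z‖ ^ (-a) :=
      hu.eventually_ge_atTop 1
    filter_upwards [self_mem_nhdsWithin, hev1, hev2] with z hzb hlt1 hge1
    have hz1 : ‖z‖ < 1 := by
      simpa using mem_ball_zero_iff.mp hzb
    calc ‖Dh (fun z => Complex.exp (-(((1 + z) / (1 - z)) ^ (a : ℂ)))) z‖
        ≤ 8 * a * ‖1 - z‖ ^ (-a) *
          Real.exp (-(c * ‖1 - z‖ ^ (-a))) := key_bound ha ha1 hz1 hlt1 hge1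
      _ = 8 * a / c * ((c * ‖1 - z‖ ^ (-a)) *
          Real.exp (-(c * ‖1 - z‖ ^ (-a)))) := by
          field_simp
  · -- ζ ≠ 1 : φ extends continuously with |φ(ζ)| < 1
    have h1ζ : (1 : ℂ) - ζ ≠ 0 := sub_ne_zero.mpr (Ne.symm hζ1)
    have hζim : ζ.im ≠ 0 := by
      intro h0
      have hform : ζ = (ζ.re : ℂ) := by
        apply Complex.ext <;> simp [h0]
      rw [hform, Complex.norm_real, Real.norm_eq_abs] at hζ
      rcases (abs_eq (by norm_num : (0:ℝ) ≤ 1)).mp hζ with h | h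
      · exact hζ1 (by rw [hform, h]; norm_num)
      · exact hζneg (by rw [hform, h]; norm_num)
    have hwζim : ((1 + ζ) / (1 - ζ)).im ≠ 0 := by
      rw [wmap_im]
      have hns : 0 < Complex.normSq (1 - ζ) := Complex.normSq_pos.mpr h1ζ
      exact div_ne_zero (by simpa using hζim) (ne_of_gt hns)
    have hslitζ : (1 + ζ) / (1 - ζ) ∈ Complex.slitPlane :=
      Complex.mem_slitPlane_iff.mpr (Or.inr hwζim)
    have hwζ0 : (1 + ζ) / (1 - ζ) ≠ 0 := Complex.slitPlane_ne_zero hslitζ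
    have hwζre : 0 ≤ ((1 + ζ) / (1 - ζ)).re := by
      rw [wmap_re]
      have h2 : Complex.normSq ζ = 1 := by
        rw [Complex.normSq_eq_norm_sq, hζ]; norm_num
      rw [h2]
      simp
    have hgre : 0 < ((((1 + ζ) / (1 - ζ)) ^ (a : ℂ))).re :=
      lt_of_lt_of_le
        (mul_pos hcpos (Real.rpow_pos_of_pos (norm_pos_iff.mpr hwζ0) a))
        (re_cpow ha ha1 hwζ0 hwζre)
    have hφζ : ‖Complex.exp (-(((1 + ζ) / (1 - ζ)) ^ (a : ℂ)))‖ < 1 := by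
      rw [Complex.norm_exp, Complex.neg_re]
      exact Real.exp_lt_one_iff.mpr (by linarith)
    -- continuity facts at ζ
    have hwcont : ContinuousAt (fun z : ℂ => (1 + z) / (1 - z)) ζ :=
      ContinuousAt.div (by fun_prop) (by fun_prop) h1ζ
    have hgcont : ContinuousAt (fun z : ℂ => ((1 + z) / (1 - z)) ^ (a : ℂ)) ζ :=
      hwcont.cpow continuousAt_const hslitζ
    have hg1cont : ContinuousAt (fun z : ℂ => ((1 + z) / (1 - z)) ^ ((a : ℂ) - 1)) ζ :=
      hwcont.cpow continuousAt_const hslitζ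
    have hφcont : ContinuousAt (fun z : ℂ => Complex.exp (-(((1 + z) / (1 - z)) ^ (a : ℂ)))) ζ :=
      Complex.continuous_exp.continuousAt.comp hgcont.neg
    have hDcont : ContinuousAt (Dexpr a) ζ := by
      have hform : Dexpr a = fun z : ℂ =>
          -((a : ℂ) * ((1 + z) / (1 - z)) ^ ((a : ℂ) - 1) * (2 / (1 - z) ^ 2)) *
            Complex.exp (-(((1 + z) / (1 - z)) ^ (a : ℂ))) := rfl
      rw [hform]
      apply ContinuousAt.mul _ hφcont
      apply ContinuousAt.neg
      apply ContinuousAt.mul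
      · exact continuousAt_const.mul hg1cont
      · exact ContinuousAt.div continuousAt_const (by fun_prop) (pow_ne_zero 2 h1ζ)
    have hev : deriv (fun z => Complex.exp (-(((1 + z) / (1 - z)) ^ (a : ℂ))))
        =ᶠ[𝓝[ball (0:ℂ) 1] ζ] Dexpr a := by
      filter_upwards [self_mem_nhdsWithin] with z hzb
      have hz1 : ‖z‖ < 1 := by
        simpa using mem_ball_zero_iff.mp hzb
      exact (hasDerivAt_phi a (one_sub_ne_zero hz1) (slit_of_ball hz1)).deriv
    have hT2 : Tendsto (deriv (fun z => Complex.exp (-(((1 + z) / (1 - z)) ^ (a : ℂ)))))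
        (𝓝[ball (0:ℂ) 1] ζ) (𝓝 (Dexpr a ζ)) :=
      (hDcont.continuousWithinAt.tendsto).congr' hev.symm
    have hT1 : Tendsto (fun z : ℂ => 1 - (‖z‖ : ℂ) ^ 2) (𝓝[ball (0:ℂ) 1] ζ) (𝓝 0) := by
      have hcont : Continuous (fun z : ℂ => 1 - (‖z‖ : ℂ) ^ 2) :=
        continuous_const.sub ((Complex.continuous_ofReal.comp continuous_norm).pow 2)
      have h := (hcont.tendsto ζ).mono_left (nhdsWithin_le_nhds (s := ball (0:ℂ) 1))
      have hval : (1 : ℂ) - (‖ζ‖ : ℂ) ^ 2 = 0 := by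
        rw [hζ]
        norm_num
      rwa [hval] at h
    have hT3 : Tendsto (fun z : ℂ =>
          1 - (‖Complex.exp (-(((1 + z) / (1 - z)) ^ (a : ℂ)))‖ : ℂ) ^ 2)
        (𝓝[ball (0:ℂ) 1] ζ)
        (𝓝 (1 - (‖Complex.exp (-(((1 + ζ) / (1 - ζ)) ^ (a : ℂ)))‖ : ℂ) ^ 2)) := by
      have hca : ContinuousAt (fun z : ℂ =>
          1 - (‖Complex.exp (-(((1 + z) / (1 - z)) ^ (a : ℂ)))‖ : ℂ) ^ 2) ζ := by
        apply ContinuousAt.sub continuousAt_const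
        exact (Complex.continuous_ofReal.continuousAt.comp hφcont.norm).pow 2
      exact hca.continuousWithinAt.tendsto
    have hden : (1 : ℂ) - (‖Complex.exp (-(((1 + ζ) / (1 - ζ)) ^ (a : ℂ)))‖ : ℂ) ^ 2 ≠ 0 := by
      rw [show (1 : ℂ) - (‖Complex.exp (-(((1 + ζ) / (1 - ζ)) ^ (a : ℂ)))‖ : ℂ) ^ 2
          = ((1 - ‖Complex.exp (-(((1 + ζ) / (1 - ζ)) ^ (a : ℂ)))‖ ^ 2 : ℝ) : ℂ) by
        push_cast; ring]
      rw [Ne, Complex.ofReal_eq_zero]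
      have hlt : ‖Complex.exp (-(((1 + ζ) / (1 - ζ)) ^ (a : ℂ)))‖ < 1 := by
        exact hφζ
      nlinarith [norm_nonneg (Complex.exp (-(((1 + ζ) / (1 - ζ)) ^ (a : ℂ))))]
    have hDh : Tendsto (fun z : ℂ =>
        Dh (fun z => Complex.exp (-(((1 + z) / (1 - z)) ^ (a : ℂ)))) z)
        (𝓝[ball (0:ℂ) 1] ζ)
        (𝓝 (0 * Dexpr a ζ /
          (1 - (‖Complex.exp (-(((1 + ζ) / (1 - ζ)) ^ (a : ℂ)))‖ : ℂ) ^ 2))) := by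
      simp only [Dh]
      exact (hT1.mul hT2).div hT3 hden
    have hfinal := (continuous_norm.tendsto _).comp hDh
    simpa [Function.comp_def] using hfinal
end
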